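/- arXiv:1709.05032 — 7 statements merged into one kernel-verified Lean document; each statement's English description precedes it below -/
import Mathlib

section
/- Let G be a finite simple graph on vertex set {1,…,n} with ordered edge set E (so |E| is twice the number of edges), and let f_ns(t) denote the infimum of F(p) = Σ_{(v,w)∈E} p(0,0|v,w) over all synchronous nonsignalling correlations p with p_A(0|v) = p_B(0|w) = t for all v,w. Then f_ns(t) = 0 for all 0 ≤ t ≤ 1/2, and f_ns(t) = |E|·(2t−1) for all 1/2 ≤ t ≤ 1. -/
open scoped BigOperators

/-- A correlation with `n` inputs and `2` outputs: `p i j v w` is `p(i,j|v,w)`. -/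
abbrev Corr (n : ℕ) := Fin 2 → Fin 2 → Fin n → Fin n → ℝ

/-- Nonsignalling correlation. -/
def IsNS {n : ℕ} (p : Corr n) : Prop :=
  (∀ i j v w, 0 ≤ p i j v w) ∧
  (∀ v w, ∑ i, ∑ j, p i j v w = 1) ∧
  (∀ i v w w', ∑ j, p i j v w = ∑ j, p i j v w') ∧
  (∀ j v v' w, ∑ i, p i j v w = ∑ i, p i j v' w)

/-- Synchronous correlation (for two outputs). -/
def IsSync {n : ℕ} (p : Corr n) : Prop :=
  ∀ v, p 0 1 v v = 0 ∧ p 1 0 v v = 0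

/-- Both marginals of outcome `0` are constantly equal to `t`. -/
def HasMarginals {n : ℕ} (p : Corr n) (t : ℝ) : Prop :=
  (∀ v w, ∑ j, p 0 j v w = t) ∧ (∀ v w, ∑ i, p i 0 v w = t)

/-- The (ordered) edge set of a graph `G` on `Fin n`, as a finset of ordered pairs. -/
def edgeFinset' {n : ℕ} (G : SimpleGraph (Fin n)) [DecidableRel G.Adj] :
    Finset (Fin n × Fin n) :=
  Finset.univ.filter fun vw : Fin n × Fin n => G.Adj vw.1 vw.2

/-- `F(p) = Σ_{(v,w) ∈ E} p(0,0|v,w)`. -/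
def Fval {n : ℕ} (G : SimpleGraph (Fin n)) [DecidableRel G.Adj] (p : Corr n) : ℝ :=
  ∑ vw ∈ edgeFinset' G, p 0 0 vw.1 vw.2

/-- `f_ns(t)`, the infimum of `F(p)` over synchronous nonsignalling correlations with
both marginals of outcome `0` constantly equal to `t`. -/
noncomputable def fns {n : ℕ} (G : SimpleGraph (Fin n)) [DecidableRel G.Adj] (t : ℝ) : ℝ :=
  sInf {s | ∃ p : Corr n, IsNS p ∧ IsSync p ∧ HasMarginals p t ∧ s = Fval G p}

/-- Optimal correlation for `t ≤ 1/2`. -/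
def pLow (n : ℕ) (t : ℝ) : Corr n := fun i j v w =>
  if v = w then
    (if i = 0 then (if j = 0 then t else 0) else (if j = 0 then 0 else 1 - t))
  else
    (if i = 0 then (if j = 0 then 0 else t) else (if j = 0 then t else 1 - 2*t))

/-- Optimal correlation for `t ≥ 1/2`. -/
def pHigh (n : ℕ) (t : ℝ) : Corr n := fun i j v w =>
  if v = w then
    (if i = 0 then (if j = 0 then t else 0) else (if j = 0 then 0 else 1 - t))
  else
    (if i = 0 then (if j = 0 then 2*t - 1 else 1 - t) else (if j = 0 then 1 - t else 0))

lemma pLow_props {n : ℕ} {t : ℝ} (h0 : 0 ≤ t) (h1 : t ≤ 1/2) :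
    IsNS (pLow n t) ∧ IsSync (pLow n t) ∧ HasMarginals (pLow n t) t := by
  refine ⟨⟨?_, ?_, ?_, ?_⟩, ?_, ?_, ?_⟩
  · intro i j v w
    unfold pLow
    fin_cases i <;> fin_cases j <;> split_ifs <;> linarith
  · intro v w
    simp only [pLow, Fin.sum_univ_two]
    norm_num
    split_ifs <;> ring
  · intro i v w w'
    simp only [pLow, Fin.sum_univ_two]
    fin_cases i <;> norm_num <;> split_ifs <;> ring
  · intro j v v' w
    simp only [pLow, Fin.sum_univ_two]
    fin_cases j <;> norm_num <;> split_ifs <;> ring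
  · intro v; unfold pLow; norm_num
  · intro v w
    simp only [pLow, Fin.sum_univ_two]
    norm_num
    split_ifs <;> ring
  · intro v w
    simp only [pLow, Fin.sum_univ_two]
    norm_num
    split_ifs <;> ring

lemma pHigh_props {n : ℕ} {t : ℝ} (h0 : 1/2 ≤ t) (h1 : t ≤ 1) :
    IsNS (pHigh n t) ∧ IsSync (pHigh n t) ∧ HasMarginals (pHigh n t) t := by
  refine ⟨⟨?_, ?_, ?_, ?_⟩, ?_, ?_, ?_⟩
  · intro i j v w
    unfold pHigh
    fin_cases i <;> fin_cases j <;> split_ifs <;> linarith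
  · intro v w
    simp only [pHigh, Fin.sum_univ_two]
    norm_num
    split_ifs <;> ring
  · intro i v w w'
    simp only [pHigh, Fin.sum_univ_two]
    fin_cases i <;> norm_num <;> split_ifs <;> ring
  · intro j v v' w
    simp only [pHigh, Fin.sum_univ_two]
    fin_cases j <;> norm_num <;> split_ifs <;> ring
  · intro v; unfold pHigh; norm_num
  · intro v w
    simp only [pHigh, Fin.sum_univ_two]
    norm_num
    split_ifs <;> ring
  · intro v w
    simp only [pHigh, Fin.sum_univ_two]
    norm_num
    split_ifs <;> ring

/-- Pointwise lower bound `p(0,0|v,w) ≥ 2t - 1` for NS correlations with marginals `t`. -/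
lemma pointwise_lb {n : ℕ} {p : Corr n} (hNS : IsNS p) (hM : HasMarginals p t)
    (v w : Fin n) : 2 * t - 1 ≤ p 0 0 v w := by
  have h1 := hM.1 v w
  have h2 := hM.2 v w
  have h3 := hNS.2.1 v w
  have h4 := hNS.1 1 1 v w
  simp only [Fin.sum_univ_two] at h1 h2 h3
  linarith

theorem stmt0 {n : ℕ} (hn : 1 ≤ n) (G : SimpleGraph (Fin n)) [DecidableRel G.Adj] (t : ℝ) :
    (0 ≤ t → t ≤ 1 / 2 → fns G t = 0) ∧
    (1 / 2 ≤ t → t ≤ 1 → fns G t = ((edgeFinset' G).card : ℝ) * (2 * t - 1)) := by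
  constructor
  · intro h0 h1
    have hF : Fval G (pLow n t) = 0 := by
      apply Finset.sum_eq_zero
      intro vw hvw
      have hadj : G.Adj vw.1 vw.2 := by
        simpa [edgeFinset'] using hvw
      have hne : vw.1 ≠ vw.2 := hadj.ne
      simp [pLow, hne]
    obtain ⟨hNS, hSy, hMa⟩ := pLow_props (n := n) h0 h1
    have hmem : (0:ℝ) ∈ {s | ∃ p : Corr n, IsNS p ∧ IsSync p ∧ HasMarginals p t ∧ s = Fval G p} :=
      ⟨pLow n t, hNS, hSy, hMa, hF.symm⟩
    have hlb : ∀ s ∈ {s | ∃ p : Corr n, IsNS p ∧ IsSync p ∧ HasMarginals p t ∧ s = Fval G p},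
        (0:ℝ) ≤ s := by
      rintro s ⟨p, hNS', _, _, rfl⟩
      exact Finset.sum_nonneg fun vw _ => hNS'.1 0 0 vw.1 vw.2
    exact le_antisymm (csInf_le ⟨0, hlb⟩ hmem) (le_csInf ⟨0, hmem⟩ hlb)
  · intro h0 h1
    set c : ℝ := ((edgeFinset' G).card : ℝ) * (2 * t - 1) with hc
    have hF : Fval G (pHigh n t) = c := by
      unfold Fval
      rw [Finset.sum_congr rfl (fun vw hvw => ?_), Finset.sum_const, nsmul_eq_mul]
      have hadj : G.Adj vw.1 vw.2 := by
        simpa [edgeFinset'] using hvw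
      simp [pHigh, hadj.ne]
    obtain ⟨hNS, hSy, hMa⟩ := pHigh_props (n := n) h0 h1
    have hmem : c ∈ {s | ∃ p : Corr n, IsNS p ∧ IsSync p ∧ HasMarginals p t ∧ s = Fval G p} :=
      ⟨pHigh n t, hNS, hSy, hMa, hF.symm⟩
    have hlb : ∀ s ∈ {s | ∃ p : Corr n, IsNS p ∧ IsSync p ∧ HasMarginals p t ∧ s = Fval G p},
        c ≤ s := by
      rintro s ⟨p, hNS', _, hMa', rfl⟩
      have : ∀ vw ∈ edgeFinset' G, 2 * t - 1 ≤ p 0 0 vw.1 vw.2 := fun vw _ =>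
        pointwise_lb hNS' hMa' vw.1 vw.2
      calc c = (edgeFinset' G).card • (2 * t - 1) := by rw [nsmul_eq_mul]
        _ ≤ ∑ vw ∈ edgeFinset' G, p 0 0 vw.1 vw.2 := Finset.card_nsmul_le_sum _ _ _ this
    exact le_antisymm (csInf_le ⟨c, hlb⟩ hmem) (le_csInf ⟨c, hmem⟩ hlb)
end

section
/- Let G be a finite simple graph on vertex set {1,…,n} with ordered edge set E that is vertex transitive and edge transitive. For each graph automorphism π of G define β_π : ℝ^{4n²} → ℝ^{4n²} by β_π(p)(i,j|v,w) = p(i,j|π⁻¹(v),π⁻¹(w)). Let C ⊆ C_ns^s(n,2) be convex with β_π(C) ⊆ C for every automorphism π, and suppose Γ_C(t) := {p ∈ C : p_A(0|v) = p_B(0|w) = t for all v,w} is nonempty for t ∈ [0,1]. Then inf{Σ_{(v,w)∈E} p(0,0|v,w) : p ∈ Γ_C(t)} = inf{Σ_{(v,w)∈E} p(0,0|v,w) : p ∈ Γ_C(t) and p(0,0|v,w) = p(0,0|x,y) for all (v,w),(x,y) ∈ E}. -/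
open scoped BigOperators

/-- A graph automorphism of `G`, as a permutation preserving adjacency in both directions. -/
def IsGraphAut {n : ℕ} (G : SimpleGraph (Fin n)) (π : Equiv.Perm (Fin n)) : Prop :=
  ∀ v w, G.Adj v w ↔ G.Adj (π v) (π w)

/-- Vertex transitivity. -/
def VertexTransitive {n : ℕ} (G : SimpleGraph (Fin n)) : Prop :=
  ∀ v w, ∃ π : Equiv.Perm (Fin n), IsGraphAut G π ∧ π v = w

/-- Edge transitivity (for the symmetric set of ordered pairs of adjacent vertices). -/
def EdgeTransitive {n : ℕ} (G : SimpleGraph (Fin n)) : Prop :=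
  ∀ v w x y, G.Adj v w → G.Adj x y →
    ∃ π : Equiv.Perm (Fin n), IsGraphAut G π ∧ π v = x ∧ π w = y

/-- The action `β_π(p)(i,j|v,w) = p(i,j|π⁻¹(v),π⁻¹(w))`. -/
def betaMap {n : ℕ} (π : Equiv.Perm (Fin n)) (p : Corr n) : Corr n :=
  fun i j v w => p i j (π⁻¹ v) (π⁻¹ w)

lemma isGraphAut_mul {n : ℕ} {G : SimpleGraph (Fin n)} {σ π : Equiv.Perm (Fin n)}
    (hσ : IsGraphAut G σ) (hπ : IsGraphAut G π) : IsGraphAut G (σ * π) := by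
  intro v w
  exact (hπ v w).trans (hσ (π v) (π w))

lemma isGraphAut_inv {n : ℕ} {G : SimpleGraph (Fin n)} {σ : Equiv.Perm (Fin n)}
    (hσ : IsGraphAut G σ) : IsGraphAut G σ⁻¹ := by
  intro v w
  have := hσ (σ⁻¹ v) (σ⁻¹ w)
  simpa using this.symm

theorem stmt3 {n : ℕ} (hn : 1 ≤ n) (G : SimpleGraph (Fin n)) [DecidableRel G.Adj]
    (hvt : VertexTransitive G) (het : EdgeTransitive G)
    (C : Set (Corr n)) (hC : ∀ p ∈ C, IsNS p ∧ IsSync p) (hconv : Convex ℝ C)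
    (hβ : ∀ (π : Equiv.Perm (Fin n)), IsGraphAut G π → ∀ p ∈ C, betaMap π p ∈ C)
    (hne : ∀ t ∈ Set.Icc (0 : ℝ) 1, ∃ p ∈ C, HasMarginals p t)
    (t : ℝ) (ht : t ∈ Set.Icc (0 : ℝ) 1) :
    sInf {s | ∃ p ∈ C, HasMarginals p t ∧ s = Fval G p} =
      sInf {s | ∃ p ∈ C, HasMarginals p t ∧
        (∀ v w x y, G.Adj v w → G.Adj x y → p 0 0 v w = p 0 0 x y) ∧ s = Fval G p} := by
  classical
  congr 1
  ext s
  constructor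
  · rintro ⟨p, hpC, hpm, rfl⟩
    set A : Finset (Equiv.Perm (Fin n)) := Finset.univ.filter (fun π => IsGraphAut G π) with hA
    have hmemA : ∀ π, π ∈ A ↔ IsGraphAut G π := by
      intro π; simp [hA]
    have h1A : (1 : Equiv.Perm (Fin n)) ∈ A := by
      rw [hmemA]; intro v w; simp
    have hNne : (A.card : ℝ) ≠ 0 := by
      have : 0 < A.card := Finset.card_pos.mpr ⟨1, h1A⟩
      exact_mod_cast this.ne'
    set c : ℝ := (A.card : ℝ)⁻¹ with hc
    have hc0 : 0 ≤ c := by positivity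
    set q : Corr n := ∑ π ∈ A, c • betaMap π p with hq
    have hqe : ∀ i j v w, q i j v w = ∑ π ∈ A, c * p i j (π⁻¹ v) (π⁻¹ w) := by
      intro i j v w
      simp [hq, Finset.sum_apply, betaMap]
    have hcsum : ∑ _π ∈ A, c = 1 := by
      rw [Finset.sum_const, nsmul_eq_mul, hc]
      field_simp
    have hqC : q ∈ C := by
      refine hconv.sum_mem (fun π _ => hc0) hcsum (fun π hπ => ?_)
      exact hβ π ((hmemA π).mp hπ) p hpC
    have hm1 : ∀ v w, ∑ j, q 0 j v w = t := by
      intro v w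
      simp only [hqe]
      rw [Finset.sum_comm]
      calc ∑ π ∈ A, ∑ j, c * p 0 j (π⁻¹ v) (π⁻¹ w)
          = ∑ π ∈ A, c * t := by
            refine Finset.sum_congr rfl fun π _ => ?_
            rw [← Finset.mul_sum, hpm.1]
        _ = t := by rw [← Finset.sum_mul, hcsum, one_mul]
    have hm2 : ∀ v w, ∑ i, q i 0 v w = t := by
      intro v w
      simp only [hqe]
      rw [Finset.sum_comm]
      calc ∑ π ∈ A, ∑ i, c * p i 0 (π⁻¹ v) (π⁻¹ w)
          = ∑ π ∈ A, c * t := by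
            refine Finset.sum_congr rfl fun π _ => ?_
            rw [← Finset.mul_sum, hpm.2]
        _ = t := by rw [← Finset.sum_mul, hcsum, one_mul]
    have hconst : ∀ v w x y, G.Adj v w → G.Adj x y → q 0 0 v w = q 0 0 x y := by
      intro v w x y hvw hxy
      obtain ⟨σ, hσaut, hσv, hσw⟩ := het v w x y hvw hxy
      rw [hqe, hqe]
      refine Finset.sum_nbij' (fun π => σ * π) (fun π => σ⁻¹ * π) ?_ ?_ ?_ ?_ ?_
      · intro π hπ
        rw [hmemA] at *
        exact isGraphAut_mul hσaut hπ
      · intro π hπ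
        rw [hmemA] at *
        exact isGraphAut_mul (isGraphAut_inv hσaut) hπ
      · intro π _; simp [mul_assoc]
      · intro π _; simp [← mul_assoc]
      · intro π _
        congr 2
        · rw [← hσv]; simp [mul_inv_rev]
        · rw [← hσw]; simp [mul_inv_rev]
    have hFval : Fval G q = Fval G p := by
      unfold Fval
      simp only [hqe]
      rw [Finset.sum_comm]
      calc ∑ π ∈ A, ∑ vw ∈ edgeFinset' G, c * p 0 0 (π⁻¹ vw.1) (π⁻¹ vw.2)
          = ∑ π ∈ A, c * ∑ vw ∈ edgeFinset' G, p 0 0 vw.1 vw.2 := by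
            refine Finset.sum_congr rfl fun π hπ => ?_
            rw [← Finset.mul_sum]
            congr 1
            refine Finset.sum_nbij' (fun vw => (π⁻¹ vw.1, π⁻¹ vw.2))
              (fun vw => (π vw.1, π vw.2)) ?_ ?_ ?_ ?_ ?_
            · intro vw hvw
              have hπaut := (hmemA π).mp hπ
              simp only [edgeFinset', Finset.mem_filter, Finset.mem_univ, true_and] at *
              exact ((isGraphAut_inv hπaut) vw.1 vw.2).mp hvw
            · intro vw hvw
              have hπaut := (hmemA π).mp hπ
              simp only [edgeFinset', Finset.mem_filter, Finset.mem_univ, true_and] at *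
              exact (hπaut vw.1 vw.2).mp hvw
            · intro vw _; simp
            · intro vw _; simp
            · intro vw _; rfl
        _ = ∑ vw ∈ edgeFinset' G, p 0 0 vw.1 vw.2 := by
            rw [← Finset.sum_mul, hcsum, one_mul]
    exact ⟨q, hqC, ⟨hm1, hm2⟩, hconst, hFval.symm⟩
  · rintro ⟨p, h1, h2, _, rfl⟩
    exact ⟨p, h1, h2, rfl⟩
end

section
/- Let A be a unital C*-algebra and τ : A → ℂ a faithful tracial state, i.e., a linear functional with τ(1) = 1, τ(x*x) ≥ 0 for all x ∈ A with equality only when x = 0, and τ(xy) = τ(yx) for all x,y ∈ A. Let a, p ∈ A be self-adjoint elements with ap ≠ pa. Then there exists a self-adjoint element h ∈ A such that the function g : ℝ → ℝ given by g(s) = Re τ(a · exp(ish) · p · exp(−ish)) (where exp is the exponential in the Banach algebra A and i is the imaginary unit) is differentiable at 0 with g'(0) > 0. -/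
open scoped ComplexOrder

theorem stmt5 {A : Type*} [NormedRing A] [StarRing A] [CStarRing A]
    [CompleteSpace A] [NormedAlgebra ℂ A] [StarModule ℂ A]
    (τ : A →ₗ[ℂ] ℂ) (hτ1 : τ 1 = 1)
    (hτpos : ∀ x : A, 0 ≤ τ (star x * x))
    (hτfaithful : ∀ x : A, τ (star x * x) = 0 → x = 0)
    (hτtrace : ∀ x y : A, τ (x * y) = τ (y * x))
    (a p : A) (ha : IsSelfAdjoint a) (hp : IsSelfAdjoint p)
    (hne : a * p ≠ p * a) :
    ∃ h : A, IsSelfAdjoint h ∧ ∃ g' : ℝ, 0 < g' ∧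
      HasDerivAt
        (fun s : ℝ =>
          (τ (a * NormedSpace.exp (((s : ℂ) * Complex.I) • h) * p *
            NormedSpace.exp (-(((s : ℂ) * Complex.I) • h)))).re)
        g' 0 := by
  classical
  letI : CStarAlgebra A := { }
  letI : PartialOrder A := CStarAlgebra.spectralOrder A
  haveI : StarOrderedRing A := CStarAlgebra.spectralOrderedRing A
  -- τ is nonnegative on nonnegative elements
  have τnonneg : ∀ x : A, 0 ≤ x → 0 ≤ τ x := by
    intro x hx
    rw [StarOrderedRing.nonneg_iff] at hx
    induction hx using AddSubmonoid.closure_induction with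
    | mem y hy => obtain ⟨s, rfl⟩ := hy; exact hτpos s
    | zero => simp
    | add y z _ _ hy hz => rw [map_add]; exact add_nonneg hy hz
  -- τ of algebraMap ℝ
  have τalg : ∀ r : ℝ, τ (algebraMap ℝ A r) = (r : ℂ) := by
    intro r
    have : algebraMap ℝ A r = (r : ℂ) • (1 : A) := by
      rw [Algebra.algebraMap_eq_smul_one]
      rw [← Complex.coe_smul]
    rw [this, map_smul, hτ1, smul_eq_mul, mul_one]
  -- τ is real and bounded on self-adjoint elements
  have τsa : ∀ x : A, IsSelfAdjoint x → (τ x).im = 0 ∧ |(τ x).re| ≤ ‖x‖ := by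
    intro x hx
    have h1 : 0 ≤ τ (algebraMap ℝ A ‖x‖ - x) :=
      τnonneg _ (sub_nonneg.mpr (hx.le_algebraMap_norm_self))
    have h2 : 0 ≤ τ (x - (-(algebraMap ℝ A ‖x‖))) :=
      τnonneg _ (sub_nonneg.mpr (hx.neg_algebraMap_norm_le_self))
    rw [map_sub, τalg] at h1
    rw [map_sub, map_neg, τalg] at h2
    rw [Complex.le_def] at h1 h2
    simp only [Complex.sub_re, Complex.sub_im, Complex.zero_re, Complex.zero_im,
      Complex.ofReal_re, Complex.ofReal_im, Complex.neg_re, Complex.neg_im] at h1 h2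
    constructor
    · linarith [h1.2]
    · rw [abs_le]; constructor <;> linarith [h1.1, h2.1]
  -- τ is bounded
  have τbound : ∀ x : A, ‖τ x‖ ≤ 2 * ‖x‖ := by
    intro x
    obtain ⟨u, hu⟩ : ∃ u : A, u = (2⁻¹ : ℂ) • (x + star x) := ⟨_, rfl⟩
    obtain ⟨v, hv⟩ : ∃ v : A, v = ((-Complex.I) * 2⁻¹ : ℂ) • (x - star x) := ⟨_, rfl⟩
    have hs1 : star (2⁻¹ : ℂ) = 2⁻¹ := by
      rw [RCLike.star_def, Complex.conj_eq_iff_im]; norm_num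
    have hs2 : star ((-Complex.I) * 2⁻¹ : ℂ) = Complex.I * 2⁻¹ := by
      rw [RCLike.star_def]
      simp [Complex.ext_iff]
    have hux : IsSelfAdjoint u := by
      rw [IsSelfAdjoint, hu, star_smul, star_add, star_star, hs1, add_comm]
    have hvx : IsSelfAdjoint v := by
      rw [IsSelfAdjoint, hv, star_smul, star_sub, star_star, hs2]
      module
    have hxuv : x = u + Complex.I • v := by
      rw [hu, hv, smul_smul,
        show Complex.I * (-Complex.I * 2⁻¹) = (2⁻¹ : ℂ) by
          linear_combination (-(2⁻¹ : ℂ)) * Complex.I_mul_I]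
      module
    have hnu : ‖u‖ ≤ ‖x‖ := by
      rw [hu]
      calc ‖(2⁻¹ : ℂ) • (x + star x)‖ ≤ ‖(2⁻¹ : ℂ)‖ * ‖x + star x‖ := norm_smul_le _ _
        _ ≤ ‖(2⁻¹ : ℂ)‖ * (‖x‖ + ‖star x‖) :=
            mul_le_mul_of_nonneg_left (norm_add_le _ _) (norm_nonneg _)
        _ = ‖x‖ := by rw [norm_star]; simp; ring
    have hnv : ‖v‖ ≤ ‖x‖ := by
      rw [hv]
      calc ‖((-Complex.I) * 2⁻¹ : ℂ) • (x - star x)‖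
          ≤ ‖((-Complex.I) * 2⁻¹ : ℂ)‖ * ‖x - star x‖ := norm_smul_le _ _
        _ ≤ ‖((-Complex.I) * 2⁻¹ : ℂ)‖ * (‖x‖ + ‖star x‖) :=
            mul_le_mul_of_nonneg_left (norm_sub_le _ _) (norm_nonneg _)
        _ = ‖x‖ := by
            rw [norm_star, norm_mul, norm_neg, Complex.norm_I]; simp; ring
    obtain ⟨hiu, hru⟩ := τsa u hux
    obtain ⟨hiv, hrv⟩ := τsa v hvx
    have hu' : τ u = ((τ u).re : ℂ) :=
      Complex.ext (Complex.ofReal_re _).symm (by rw [hiu, Complex.ofReal_im])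
    have hv' : τ v = ((τ v).re : ℂ) :=
      Complex.ext (Complex.ofReal_re _).symm (by rw [hiv, Complex.ofReal_im])
    have hτx : τ x = ((τ u).re : ℂ) + Complex.I * ((τ v).re : ℂ) := by
      rw [hxuv, map_add, map_smul, smul_eq_mul]
      linear_combination hu' + Complex.I * hv'
    calc ‖τ x‖ ≤ ‖((τ u).re : ℂ)‖ + ‖Complex.I * ((τ v).re : ℂ)‖ := by
          rw [hτx]; exact norm_add_le _ _
      _ = |(τ u).re| + |(τ v).re| := by
          rw [norm_mul, Complex.norm_I, one_mul, Complex.norm_real, Complex.norm_real]; rfl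
      _ ≤ ‖x‖ + ‖x‖ := add_le_add (hru.trans hnu) (hrv.trans hnv)
      _ = 2 * ‖x‖ := by ring
  -- bundle τ as a continuous linear map
  let τC : A →L[ℂ] ℂ := LinearMap.mkContinuous τ 2 τbound
  -- the commutator
  set c : A := p * a - a * p with hc
  have hcne : c ≠ 0 := sub_ne_zero.mpr (Ne.symm hne)
  have hcstar : star c = -c := by
    rw [hc, star_sub, star_mul, star_mul, ha.star_eq, hp.star_eq, neg_sub]
  refine ⟨Complex.I • c, ?_, (τ (star c * c)).re, ?_, ?_⟩
  · rw [IsSelfAdjoint, star_smul, hcstar, RCLike.star_def, Complex.conj_I, neg_smul, smul_neg,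
      neg_neg]
  · have hle : 0 ≤ τ (star c * c) := hτpos c
    have hne0 : τ (star c * c) ≠ 0 := fun hh => hcne (hτfaithful c hh)
    have : (0 : ℂ) < τ (star c * c) := lt_of_le_of_ne hle (Ne.symm hne0)
    exact (Complex.lt_def.mp this).1
  · -- the derivative computation
    set w : A := Complex.I • (Complex.I • c) with hw
    have hwc : w = -c := by
      rw [hw, smul_smul, Complex.I_mul_I, neg_one_smul]
    have hF : HasDerivAt (fun s : ℝ => NormedSpace.exp (s • w)) (1 * w) 0 := by
      have := hasDerivAt_exp_smul_const (𝕂 := ℝ) w (0 : ℝ)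
      simpa using this
    have hG : HasDerivAt (fun s : ℝ => NormedSpace.exp (s • (-w))) (1 * (-w)) 0 := by
      have := hasDerivAt_exp_smul_const (𝕂 := ℝ) (-w) (0 : ℝ)
      simpa using this
    have hΦ2 : HasDerivAt
        (fun s : ℝ => a * NormedSpace.exp (s • w) * p * NormedSpace.exp (s • (-w)))
        (a * w * p - a * p * w) 0 := by
      have hΦ := ((hF.const_mul a).mul_const p).mul hG
      convert hΦ using 1
      · rfl
      simp only [zero_smul, NormedSpace.exp_zero, one_mul, mul_one]
      noncomm_ring
    -- compose with the continuous linear map Re ∘ τ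
    let M : A →L[ℝ] ℝ := Complex.reCLM.comp (τC.restrictScalars ℝ)
    have hM : ∀ x : A, M x = (τ x).re := fun x => rfl
    have hfinal := (M.hasFDerivAt).comp_hasDerivAt 0 hΦ2
    have key : M (a * w * p - a * p * w) = (τ (star c * c)).re := by
      rw [hM]
      congr 1
      have e1 : a * w * p - a * p * w = (a * p) * c - (a * c) * p := by rw [hwc]; noncomm_ring
      rw [e1, map_sub, hτtrace (a * c) p]
      have e2 : p * (a * c) = (p * a) * c := (mul_assoc p a c).symm
      rw [e2, ← map_sub]
      congr 1
      rw [hcstar, hc]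
      noncomm_ring
    have hfun : (fun s : ℝ =>
        (τ (a * NormedSpace.exp (((s : ℂ) * Complex.I) • (Complex.I • c)) * p *
          NormedSpace.exp (-(((s : ℂ) * Complex.I) • (Complex.I • c))))).re) =
        fun s : ℝ => M (a * NormedSpace.exp (s • w) * p * NormedSpace.exp (s • (-w))) := by
      funext s
      rw [hM]
      have e3 : ((s : ℂ) * Complex.I) • (Complex.I • c) = s • w := by
        rw [hw, mul_smul, Complex.coe_smul]
      rw [e3, smul_neg, ← smul_neg s w]
    rw [hfun, ← key]
    exact hfinal
end

section
/- Let G be a finite simple graph on vertices {1,…,n} with ordered edge set E and let t ∈ [0,1]. Suppose d ≥ 1, P₁,…,Pₙ ∈ M_d(ℂ) are projections, and ρ ∈ M_d(ℂ) is positive definite (positive semidefinite and invertible) with Tr(ρ) = 1, ρP_v = P_vρ and Tr(ρP_v) = t for all v, and suppose this instance attains the infimum: Σ_{(v,w)∈E} Tr(ρP_vP_w) = f_q(t). Then for every vertex v, the projection P_v commutes with p_v := Σ_{w : (v,w)∈E} P_w. -/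
open scoped BigOperators ComplexOrder

/-- A projection matrix: self-adjoint idempotent. -/
def IsProjMat {d : ℕ} (P : Matrix (Fin d) (Fin d) ℂ) : Prop :=
  P.IsHermitian ∧ P * P = P

/-- The set of values `Σ_{(v,w)∈E} Tr(ρ P_v P_w)` over all `d ≥ 1`, projections
`P₁,…,Pₙ ∈ M_d(ℂ)` and positive semidefinite `ρ ∈ M_d(ℂ)` with `Tr(ρ)=1`,
`ρ P_v = P_v ρ` and `Tr(ρ P_v) = t` for all `v`. -/
def fqSet {n : ℕ} (G : SimpleGraph (Fin n)) [DecidableRel G.Adj] (t : ℝ) : Set ℝ :=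
  {s | ∃ (d : ℕ), 1 ≤ d ∧
    ∃ (P : Fin n → Matrix (Fin d) (Fin d) ℂ) (ρ : Matrix (Fin d) (Fin d) ℂ),
      (∀ v, IsProjMat (P v)) ∧ ρ.PosSemidef ∧ ρ.trace = 1 ∧
      (∀ v, ρ * P v = P v * ρ) ∧ (∀ v, (ρ * P v).trace = (t : ℂ)) ∧
      (s : ℂ) = ∑ vw ∈ edgeFinset' G, (ρ * P vw.1 * P vw.2).trace}

/-- `f_q(t)` for the graph `G`. -/
noncomputable def fq {n : ℕ} (G : SimpleGraph (Fin n)) [DecidableRel G.Adj] (t : ℝ) : ℝ :=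
  sInf (fqSet G t)

section Stmt6Aux

open Matrix NormedSpace

attribute [local instance] Matrix.linftyOpSemiNormedRing Matrix.linftyOpNormedRing
  Matrix.linftyOpNormedAlgebra

variable {d : ℕ}

/-- The linear functional `X ↦ Tr(B X C)`. -/
noncomputable def traceMulLin (B C : Matrix (Fin d) (Fin d) ℂ) :
    Matrix (Fin d) (Fin d) ℂ →ₗ[ℝ] ℂ where
  toFun X := (B * X * C).trace
  map_add' X Y := by simp [Matrix.mul_add, Matrix.add_mul]
  map_smul' r X := by simp [Matrix.mul_smul, Matrix.smul_mul]

lemma hasDerivAt_traceMul (B C : Matrix (Fin d) (Fin d) ℂ) {f : ℝ → Matrix (Fin d) (Fin d) ℂ}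
    {D : Matrix (Fin d) (Fin d) ℂ} {x : ℝ} (hf : HasDerivAt f D x) :
    HasDerivAt (fun ε => (B * f ε * C).trace) ((B * D * C).trace) x := by
  have h1 := ((LinearMap.toContinuousLinearMap (traceMulLin B C)).hasFDerivAt
      (x := f x)).comp x hf.hasFDerivAt
  have h2 := h1.hasDerivAt
  convert h2 using 1
  · rfl
  · rfl
  · show _ = traceMulLin B C (ContinuousLinearMap.toSpanSingleton ℝ D 1)
    simp [traceMulLin]

lemma psd_trace_nonneg {S : Matrix (Fin d) (Fin d) ℂ} (hS : S.PosSemidef) : 0 ≤ S.trace := by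
  rw [Matrix.trace]
  apply Finset.sum_nonneg
  intro i _
  exact hS.diag_nonneg

lemma trace_mul_psd_nonneg {ρ S : Matrix (Fin d) (Fin d) ℂ} (hρ : ρ.PosSemidef)
    (hS : S.PosSemidef) : 0 ≤ (ρ * S).trace := by
  obtain ⟨B, hB⟩ : ∃ B : Matrix (Fin d) (Fin d) ℂ, ρ = Bᴴ * B := by
    open scoped MatrixOrder in exact CStarAlgebra.nonneg_iff_eq_star_mul_self.mp hρ.nonneg
  have h : (ρ * S).trace = (B * S * Bᴴ).trace := by
    rw [hB, Matrix.mul_assoc, trace_mul_comm]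
  rw [h]
  exact psd_trace_nonneg (hS.mul_mul_conjTranspose_same B)

lemma eq_zero_of_trace_mul_conjTranspose {K : Matrix (Fin d) (Fin d) ℂ}
    (h : ((K * Kᴴ).trace).re = 0) : K = 0 := by
  have htr : (K * Kᴴ).trace = ((∑ i, ∑ j, Complex.normSq (K i j) : ℝ) : ℂ) := by
    rw [Matrix.trace]
    simp only [Matrix.diag_apply, Matrix.mul_apply, Matrix.conjTranspose_apply]
    push_cast
    congr 1; ext i; congr 1; ext j
    rw [← Complex.mul_conj]
    rfl
  rw [htr] at h
  simp only [Complex.ofReal_re] at h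
  have hz : ∀ i ∈ Finset.univ, ∀ j ∈ Finset.univ, Complex.normSq (K i j) = 0 := by
    have h1 := (Finset.sum_eq_zero_iff_of_nonneg (fun (i : Fin d) _ =>
      Finset.sum_nonneg fun j _ => Complex.normSq_nonneg (K i j))).mp h
    intro i hi j hj
    exact (Finset.sum_eq_zero_iff_of_nonneg fun j _ => Complex.normSq_nonneg _).mp (h1 i hi) j hj
  ext i j
  simpa using Complex.normSq_eq_zero.mp (hz i (Finset.mem_univ i) j (Finset.mem_univ j))

lemma mem_edgeFinset' {n : ℕ} {G : SimpleGraph (Fin n)} [DecidableRel G.Adj]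
    {e : Fin n × Fin n} : e ∈ edgeFinset' G ↔ G.Adj e.1 e.2 := by
  simp [edgeFinset']

lemma sum_edge_fst {n : ℕ} (G : SimpleGraph (Fin n)) [DecidableRel G.Adj] (v : Fin n)
    (f : Fin n → ℂ) :
    ∑ e ∈ (edgeFinset' G).filter (fun e => e.1 = v), f e.2
      = ∑ w ∈ Finset.univ.filter (fun w => G.Adj v w), f w := by
  refine Finset.sum_nbij' (fun e => e.2) (fun w => (v, w)) ?_ ?_ ?_ ?_ ?_
  · intro a ha
    simp only [Finset.mem_filter, mem_edgeFinset'] at ha ⊢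
    exact ⟨Finset.mem_univ _, ha.2 ▸ ha.1⟩
  · intro w hw
    simp only [Finset.mem_filter, mem_edgeFinset', Finset.mem_univ, true_and] at hw ⊢
    exact ⟨hw, trivial⟩
  · intro a ha
    simp only [Finset.mem_filter] at ha
    exact Prod.ext ha.2.symm rfl
  · intro w _; rfl
  · intro a _; rfl

lemma sum_edge_snd {n : ℕ} (G : SimpleGraph (Fin n)) [DecidableRel G.Adj] (v : Fin n)
    (f : Fin n → ℂ) :
    ∑ e ∈ (edgeFinset' G).filter (fun e => e.2 = v), f e.1
      = ∑ w ∈ Finset.univ.filter (fun w => G.Adj v w), f w := by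
  refine Finset.sum_nbij' (fun e => e.1) (fun w => (w, v)) ?_ ?_ ?_ ?_ ?_
  · intro a ha
    simp only [Finset.mem_filter, mem_edgeFinset'] at ha ⊢
    exact ⟨Finset.mem_univ _, (ha.2 ▸ ha.1).symm⟩
  · intro w hw
    simp only [Finset.mem_filter, mem_edgeFinset', Finset.mem_univ, true_and] at hw ⊢
    exact ⟨hw.symm, trivial⟩
  · intro a ha
    simp only [Finset.mem_filter] at ha
    exact Prod.ext rfl ha.2.symm
  · intro w _; rfl
  · intro a _; rfl

lemma edge_sum_real {n : ℕ} (G : SimpleGraph (Fin n)) [DecidableRel G.Adj]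
    (ρ : Matrix (Fin d) (Fin d) ℂ) (Q : Fin n → Matrix (Fin d) (Fin d) ℂ)
    (hρ : ρ.IsHermitian) (hQ : ∀ w, (Q w).IsHermitian) :
    (((∑ vw ∈ edgeFinset' G, (ρ * Q vw.1 * Q vw.2).trace).re : ℝ) : ℂ)
      = ∑ vw ∈ edgeFinset' G, (ρ * Q vw.1 * Q vw.2).trace := by
  apply Complex.conj_eq_iff_re.mp
  rw [map_sum]
  have hterm : ∀ a b : Fin n, (starRingEnd ℂ) ((ρ * Q a * Q b).trace)
      = (ρ * Q b * Q a).trace := by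
    intro a b
    have h : (starRingEnd ℂ) ((ρ * Q a * Q b).trace) = ((ρ * Q a * Q b)ᴴ).trace := by
      rw [trace_conjTranspose]; rfl
    rw [h, Matrix.conjTranspose_mul, Matrix.conjTranspose_mul, hρ.eq, (hQ a).eq, (hQ b).eq,
      ← Matrix.mul_assoc, trace_mul_comm, ← Matrix.mul_assoc]
  calc ∑ vw ∈ edgeFinset' G, (starRingEnd ℂ) ((ρ * Q vw.1 * Q vw.2).trace)
      = ∑ vw ∈ edgeFinset' G, (ρ * Q vw.2 * Q vw.1).trace :=
        Finset.sum_congr rfl fun e _ => hterm e.1 e.2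
    _ = ∑ vw ∈ edgeFinset' G, (ρ * Q vw.1 * Q vw.2).trace := by
        refine Finset.sum_equiv (Equiv.prodComm _ _) ?_ ?_
        · intro e
          simp only [mem_edgeFinset', Equiv.prodComm_apply, Prod.fst_swap, Prod.snd_swap]
          exact ⟨fun h => h.symm, fun h => h.symm⟩
        · intro e _; rfl

theorem stmt6 {n : ℕ} (hn : 1 ≤ n) (G : SimpleGraph (Fin n)) [DecidableRel G.Adj]
    (t : ℝ) (ht : t ∈ Set.Icc (0 : ℝ) 1)
    (d : ℕ) (hd : 1 ≤ d)
    (P : Fin n → Matrix (Fin d) (Fin d) ℂ) (ρ : Matrix (Fin d) (Fin d) ℂ)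
    (hP : ∀ v, IsProjMat (P v)) (hρ : ρ.PosDef) (hρtr : ρ.trace = 1)
    (hcomm : ∀ v, ρ * P v = P v * ρ) (hmarg : ∀ v, (ρ * P v).trace = (t : ℂ))
    (hattain : ((fq G t : ℝ) : ℂ) = ∑ vw ∈ edgeFinset' G, (ρ * P vw.1 * P vw.2).trace) :
    ∀ v : Fin n, P v * (∑ w ∈ Finset.univ.filter fun w => G.Adj v w, P w) =
      (∑ w ∈ Finset.univ.filter fun w => G.Adj v w, P w) * P v := by
  intro v
  classical
  set N : Finset (Fin n) := Finset.univ.filter (fun w => G.Adj v w) with hN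
  set p : Matrix (Fin d) (Fin d) ℂ := ∑ w ∈ N, P w with hp
  have hPH : ∀ w, (P w)ᴴ = P w := fun w => (hP w).1
  have hPmul : ∀ w, P w * P w = P w := fun w => (hP w).2
  have hρH : ρᴴ = ρ := hρ.posSemidef.isHermitian
  have hpH : pᴴ = p := by
    rw [hp, Matrix.conjTranspose_sum]
    exact Finset.sum_congr rfl fun w _ => hPH w
  have hρp : ρ * p = p * ρ := by
    rw [hp, Finset.mul_sum, Finset.sum_mul]
    exact Finset.sum_congr rfl fun w _ => hcomm w
  have hmulcomm : ∀ X Y : Matrix (Fin d) (Fin d) ℂ, ρ * X = X * ρ → ρ * Y = Y * ρ →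
      ρ * (X * Y) = (X * Y) * ρ := by
    intro X Y hX hY
    rw [← Matrix.mul_assoc, hX, Matrix.mul_assoc, hY, ← Matrix.mul_assoc]
  set C : Matrix (Fin d) (Fin d) ℂ := P v * p - p * P v with hC
  have hρC : ρ * C = C * ρ := by
    rw [hC, Matrix.mul_sub, Matrix.sub_mul,
      hmulcomm _ _ (hcomm v) hρp, hmulcomm _ _ hρp (hcomm v)]
  set K : Matrix (Fin d) (Fin d) ℂ := ρ * C with hK
  have hCH : Cᴴ = -C := by
    rw [hC, Matrix.conjTranspose_sub, Matrix.conjTranspose_mul, Matrix.conjTranspose_mul,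
      hPH, hpH]
    exact (neg_sub _ _).symm
  have hKH : Kᴴ = -K := by
    rw [hK, Matrix.conjTranspose_mul, hCH, hρH, Matrix.neg_mul, ← hρC]
  have hρK : ρ * K = K * ρ := hmulcomm ρ C rfl hρC
  -- swap helpers
  have hswap_v : ∀ Y, P v * (ρ * Y) = ρ * (P v * Y) := by
    intro Y; rw [← Matrix.mul_assoc, ← hcomm v, Matrix.mul_assoc]
  have hswap_p : ∀ Y, p * (ρ * Y) = ρ * (p * Y) := by
    intro Y; rw [← Matrix.mul_assoc, ← hρp, Matrix.mul_assoc]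
  -- the unitary path
  set U : ℝ → Matrix (Fin d) (Fin d) ℂ := fun ε => exp (ε • K) with hU
  have hU0 : U 0 = 1 := by rw [hU]; simp only [zero_smul]; exact exp_zero
  have hUinv : ∀ ε, U ε * U (-ε) = 1 := by
    intro ε
    rw [hU]; simp only
    rw [show (-ε) • K = -(ε • K) from neg_smul ε K,
      ← Matrix.exp_add_of_commute (ε • K) _ (Commute.neg_right (Commute.refl _)), add_neg_cancel, exp_zero]
  have hUinv' : ∀ ε, U (-ε) * U ε = 1 := by
    intro ε
    have := hUinv (-ε)
    rwa [neg_neg] at this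
  have hUH : ∀ ε, (U ε)ᴴ = U (-ε) := by
    intro ε
    rw [hU]; simp only
    rw [← Matrix.exp_conjTranspose]
    congr 1
    rw [conjTranspose_smul, hKH]
    simp
  have hUρ : ∀ ε, ρ * U ε = U ε * ρ := fun ε =>
    (Commute.exp_right (Commute.smul_right hρK ε)).eq
  set Pv : ℝ → Matrix (Fin d) (Fin d) ℂ := fun ε => U ε * P v * U (-ε) with hPvdef
  have hPv0 : Pv 0 = P v := by
    rw [hPvdef]; simp only [neg_zero, hU0, Matrix.mul_one, Matrix.one_mul]
  have hPvH : ∀ ε, (Pv ε)ᴴ = Pv ε := by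
    intro ε
    rw [hPvdef]; simp only
    rw [Matrix.conjTranspose_mul, Matrix.conjTranspose_mul, hUH, hUH, hPH, neg_neg,
      ← Matrix.mul_assoc]
  have hPvproj : ∀ ε, Pv ε * Pv ε = Pv ε := by
    intro ε
    rw [hPvdef]; simp only [Matrix.mul_assoc]
    rw [← Matrix.mul_assoc (U (-ε)) (U ε), hUinv' ε, Matrix.one_mul,
      ← Matrix.mul_assoc (P v) (P v), hPmul v]
  have hρPv : ∀ ε, ρ * Pv ε = Pv ε * ρ := by
    intro ε
    rw [hPvdef]; simp only [Matrix.mul_assoc]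
    rw [← Matrix.mul_assoc ρ (U ε), hUρ ε, Matrix.mul_assoc,
      ← Matrix.mul_assoc ρ (P v), hcomm v, Matrix.mul_assoc, hUρ (-ε)]
  have hPvtr : ∀ ε, (ρ * Pv ε).trace = (t : ℂ) := by
    intro ε
    rw [hPvdef]; simp only [Matrix.mul_assoc]
    rw [← Matrix.mul_assoc ρ (U ε), hUρ ε, Matrix.mul_assoc, trace_mul_comm]
    simp only [Matrix.mul_assoc]
    rw [hUinv' ε, Matrix.mul_one]
    exact hmarg v
  set P' : ℝ → Fin n → Matrix (Fin d) (Fin d) ℂ :=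
    fun ε w => if w = v then Pv ε else P w with hP'def
  have hP'0 : P' 0 = P := by
    funext w
    rw [hP'def]; simp only
    split_ifs with hw
    · rw [hw, hPv0]
    · rfl
  have hP'H : ∀ ε w, (P' ε w).IsHermitian := by
    intro ε w
    rw [hP'def]; simp only
    split_ifs with hw
    · exact hPvH ε
    · exact hPH w
  -- membership of the perturbed values in fqSet
  have hmem : ∀ ε : ℝ,
      ((∑ vw ∈ edgeFinset' G, (ρ * P' ε vw.1 * P' ε vw.2).trace).re) ∈ fqSet G t := by
    intro ε
    have hreal := edge_sum_real G ρ (P' ε) hρ.posSemidef.isHermitian (hP'H ε)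
    refine ⟨d, hd, P' ε, ρ, ?_, hρ.posSemidef, hρtr, ?_, ?_, hreal⟩
    · intro w
      rw [hP'def]; simp only
      split_ifs with hw
      · exact ⟨hPvH ε, hPvproj ε⟩
      · exact hP w
    · intro w
      rw [hP'def]; simp only
      split_ifs with hw
      · exact hρPv ε
      · exact hcomm w
    · intro w
      rw [hP'def]; simp only
      split_ifs with hw
      · exact hPvtr ε
      · exact hmarg w
  have hbdd : BddBelow (fqSet G t) := by
    refine ⟨0, fun s hs => ?_⟩
    obtain ⟨d', hd', Q, σ, hQ, hσ, hσtr, hcm, hmg, hsum⟩ := hs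
    have h0 : (0 : ℂ) ≤ (s : ℂ) := by
      rw [hsum]
      apply Finset.sum_nonneg
      intro e _
      have hσQ : σ * Q e.1 = Q e.1 * (σ * Q e.1) := by
        conv_lhs => rw [← (hQ e.1).2, ← Matrix.mul_assoc, hcm e.1, Matrix.mul_assoc]
      have htr : (σ * Q e.1 * Q e.2).trace = (σ * (Q e.1 * Q e.2 * Q e.1)).trace := by
        conv_lhs => rw [hσQ, Matrix.mul_assoc]
        rw [trace_mul_comm]
        simp only [Matrix.mul_assoc]
      rw [htr]
      have hpsd : (Q e.1 * Q e.2 * Q e.1).PosSemidef := by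
        have h1 := Matrix.posSemidef_conjTranspose_mul_self (Q e.2 * Q e.1)
        have h2 : (Q e.2 * Q e.1)ᴴ * (Q e.2 * Q e.1) = Q e.1 * Q e.2 * Q e.1 := by
          rw [Matrix.conjTranspose_mul, (hQ e.1).1.eq, (hQ e.2).1.eq]
          calc Q e.1 * Q e.2 * (Q e.2 * Q e.1)
              = Q e.1 * (Q e.2 * Q e.2) * Q e.1 := by simp only [Matrix.mul_assoc]
            _ = Q e.1 * Q e.2 * Q e.1 := by rw [(hQ e.2).2]
        rwa [h2] at h1
      exact trace_mul_psd_nonneg hσ hpsd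
    exact_mod_cast Complex.zero_le_real.mp h0
  have hlow : ∀ ε : ℝ,
      fq G t ≤ (∑ vw ∈ edgeFinset' G, (ρ * P' ε vw.1 * P' ε vw.2).trace).re :=
    fun ε => csInf_le hbdd (hmem ε)
  set h : ℝ → ℂ := fun ε => ∑ vw ∈ edgeFinset' G, (ρ * P' ε vw.1 * P' ε vw.2).trace with hhdef
  have hattain' : h 0 = ((fq G t : ℝ) : ℂ) := by
    rw [hhdef]; simp only [hP'0]; exact hattain.symm
  set g : ℝ → ℝ := fun ε => (h ε).re with hgdef
  have hg0 : g 0 = fq G t := by rw [hgdef]; simp only [hattain', Complex.ofReal_re]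
  have hmin : IsLocalMin g 0 :=
    Filter.Eventually.of_forall (fun ε => by rw [hg0]; exact hlow ε)
  -- derivative computations
  set X : Matrix (Fin d) (Fin d) ℂ := K * P v - P v * K with hX
  have hUd : HasDerivAt U K 0 := by
    have h1 := hasDerivAt_exp_smul_const (𝕂 := ℝ) K 0
    simp only [zero_smul, NormedSpace.exp_zero, one_mul] at h1
    exact h1
  have hUnegd : HasDerivAt (fun ε : ℝ => U (-ε)) (-K) 0 := by
    have h2 : HasDerivAt (fun ε : ℝ => -ε) (-1 : ℝ) 0 := (hasDerivAt_id (0:ℝ)).neg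
    have h3 : HasDerivAt U K (-(0:ℝ)) := by rwa [neg_zero]
    have h4 := h3.scomp (0:ℝ) h2
    simp only [Function.comp_def, neg_smul, one_smul] at h4
    exact h4
  have hPvd : HasDerivAt Pv X 0 := by
    have h1 : HasDerivAt (fun ε => U ε * P v) (K * P v) 0 := hUd.mul_const (P v)
    have h2 := h1.mul hUnegd
    rw [hX]
    have h5 : K * P v * U (-0) + U 0 * P v * -K = K * P v - P v * K := by
      rw [neg_zero, hU0]
      simp [sub_eq_add_neg, Matrix.mul_neg]
    rw [← h5]
    exact h2
  set D : Fin n × Fin n → ℂ := fun e =>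
    (if e.1 = v then (ρ * X * P e.2).trace else 0) +
    (if e.2 = v then (ρ * P e.1 * X).trace else 0) with hDdef
  have hedge : ∀ e ∈ edgeFinset' G,
      HasDerivAt (fun ε => (ρ * P' ε e.1 * P' ε e.2).trace) (D e) 0 := by
    intro e he
    have hadj : G.Adj e.1 e.2 := mem_edgeFinset'.mp he
    by_cases h1 : e.1 = v
    · have h2 : e.2 ≠ v := by
        intro h2
        rw [h1, h2] at hadj
        exact G.irrefl hadj
      have hder := hasDerivAt_traceMul ρ (P e.2) hPvd
      rw [hDdef, hP'def]
      simp only [h1, h2, if_true, if_false, ite_true, ite_false, eq_self_iff_true, add_zero]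
      exact hder
    · by_cases h2 : e.2 = v
      · have hder := hasDerivAt_traceMul (ρ * P e.1) 1 hPvd
        simp only [Matrix.mul_one] at hder
        rw [hDdef, hP'def]
        simp only [h1, h2, if_true, if_false, ite_true, ite_false, eq_self_iff_true, zero_add]
        exact hder
      · rw [hDdef, hP'def]
        simp only [h1, h2, if_false, ite_false, add_zero]
        exact hasDerivAt_const 0 _
  have hhd : HasDerivAt h (∑ e ∈ edgeFinset' G, D e) 0 := HasDerivAt.fun_sum hedge
  have hgd : HasDerivAt g ((∑ e ∈ edgeFinset' G, D e).re) 0 := by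
    have h1 := (Complex.reCLM.hasFDerivAt.comp (0:ℝ) hhd.hasFDerivAt).hasDerivAt
    simpa [hgdef, Function.comp_def] using h1
  have hder0 : (∑ e ∈ edgeFinset' G, D e).re = 0 := hmin.hasDerivAt_eq_zero hgd
  -- computing the derivative explicitly
  have hsumD : ∑ e ∈ edgeFinset' G, D e = (ρ * X * p).trace + (ρ * p * X).trace := by
    rw [hDdef]
    rw [Finset.sum_add_distrib]
    congr 1
    · rw [← Finset.sum_filter, sum_edge_fst G v (fun w => (ρ * X * P w).trace), hp,
        Finset.mul_sum, Matrix.trace_sum]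
    · rw [← Finset.sum_filter, sum_edge_snd G v (fun w => (ρ * P w * X).trace), hp,
        Finset.mul_sum, Finset.sum_mul, Matrix.trace_sum]
  have t1a : ρ * (K * P v) * p = K * (ρ * (P v * p)) := by
    simp only [← Matrix.mul_assoc]
    rw [hρK]
  have t1b : (ρ * (P v * K) * p).trace = (K * (ρ * (p * P v))).trace := by
    rw [trace_mul_comm, trace_mul_comm K]
    simp only [← Matrix.mul_assoc]
    rw [← hρp]
  have hT1 : (ρ * X * p).trace = (K * K).trace := by
    rw [hX, Matrix.mul_sub ρ, Matrix.sub_mul, Matrix.trace_sub, t1a, t1b,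
      ← Matrix.trace_sub, ← Matrix.mul_sub K, ← Matrix.mul_sub ρ, ← hC, ← hK]
  have t2a : ((ρ * p) * (K * P v)).trace = (K * (ρ * (P v * p))).trace := by
    rw [trace_mul_comm]
    congr 1
    simp only [Matrix.mul_assoc]
    congr 1
    exact hswap_v p
  have t2b : ((ρ * p) * (P v * K)).trace = (K * (ρ * (p * P v))).trace := by
    rw [show (ρ * p) * (P v * K) = ((ρ * p) * P v) * K from by simp only [Matrix.mul_assoc],
      trace_mul_comm (ρ * p * P v) K]
    congr 1
    simp only [Matrix.mul_assoc]
  have hT2 : (ρ * p * X).trace = (K * K).trace := by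
    rw [hX, Matrix.mul_sub (ρ * p), Matrix.trace_sub, t2a, t2b,
      ← Matrix.trace_sub, ← Matrix.mul_sub K, ← Matrix.mul_sub ρ, ← hC, ← hK]
  have hKK : K * K = -(K * Kᴴ) := by
    rw [hKH, Matrix.mul_neg, neg_neg]
  have hKKre : ((K * Kᴴ).trace).re = 0 := by
    have h1 : (∑ e ∈ edgeFinset' G, D e) = -((K * Kᴴ).trace) + -((K * Kᴴ).trace) := by
      rw [hsumD, hT1, hT2, hKK, Matrix.trace_neg]
    rw [h1] at hder0
    simp only [Complex.add_re, Complex.neg_re] at hder0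
    linarith
  have hKzero : K = 0 := eq_zero_of_trace_mul_conjTranspose hKKre
  have hCzero : C = 0 := by
    have hdet : IsUnit ρ.det := (Matrix.isUnit_iff_isUnit_det ρ).mp hρ.isUnit
    have h1 : ρ⁻¹ * (ρ * C) = ρ⁻¹ * 0 := by rw [← hK, hKzero]
    rwa [← Matrix.mul_assoc, Matrix.nonsing_inv_mul ρ hdet, Matrix.one_mul,
      Matrix.mul_zero] at h1
  have := hCzero
  rw [hC] at this
  exact sub_eq_zero.mp this

end Stmt6Aux
end

section
/- Let n ≥ 3 and let G = K_n be the complete graph on n vertices, so its ordered edge set E consists of all pairs (v,w) with v ≠ w and |E| = n² − n. Then f_vect(t) = 0 for 0 ≤ t ≤ 1/n; f_vect(t) = nt(nt−1) for 1/n ≤ t ≤ (n−1)/n; and f_vect(t) = (n²−n)(2t−1) for (n−1)/n ≤ t ≤ 1. -/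
open scoped BigOperators

/-- A realization of `p` as a vectorial correlation, in a real Hilbert space. -/
structure VectRealization (n : ℕ) (p : Corr n) where
  H : Type
  [nacg : NormedAddCommGroup H]
  [ips : InnerProductSpace ℝ H]
  x : Fin n → Fin 2 → H
  y : Fin n → Fin 2 → H
  h : H
  hnorm : ‖h‖ = 1
  hxorth : ∀ v, inner ℝ (x v 0) (x v 1) = (0 : ℝ)
  hyorth : ∀ w, inner ℝ (y w 0) (y w 1) = (0 : ℝ)
  hxsum : ∀ v, x v 0 + x v 1 = h
  hysum : ∀ w, y w 0 + y w 1 = h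
  hval : ∀ i j v w, p i j v w = inner ℝ (x v i) (y w j)
  hnn : ∀ i j v w, 0 ≤ p i j v w

/-- `p` is a vectorial correlation. -/
def IsVect {n : ℕ} (p : Corr n) : Prop := Nonempty (VectRealization n p)

/-- `f_vect(t)` for the graph `G`: the infimum of `F(p)` over synchronous vectorial
correlations `p` whose marginals of outcome `0` are constantly equal to `t`. -/
noncomputable def fvect {n : ℕ} (G : SimpleGraph (Fin n)) [DecidableRel G.Adj] (t : ℝ) : ℝ :=
  sInf {s | ∃ p : Corr n, IsVect p ∧ IsSync p ∧ HasMarginals p t ∧ s = Fval G p}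


/-! ### Auxiliary results -/

lemma inner_real' (a b : ℝ) : (inner ℝ a b : ℝ) = a * b := by
  rw [RCLike.inner_apply']; simp

lemma offdiag_sum {n : ℕ} (f : Fin n → Fin n → ℝ) :
    ∑ vw ∈ edgeFinset' (⊤ : SimpleGraph (Fin n)), f vw.1 vw.2
      = (∑ v, ∑ w, f v w) - ∑ v, f v v := by
  rw [edgeFinset', Finset.sum_filter, Fintype.sum_prod_type]
  have h2 : ∀ v : Fin n, ∑ w, (if (⊤ : SimpleGraph (Fin n)).Adj v w then f v w else 0)
      = (∑ w, f v w) - f v v := by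
    intro v
    have h1 : ∀ w, (if (⊤ : SimpleGraph (Fin n)).Adj v w then f v w else 0)
        = f v w - (if v = w then f v w else 0) := by
      intro w
      by_cases h : v = w <;> simp [h, SimpleGraph.top_adj]
    rw [Finset.sum_congr rfl (fun w _ => h1 w), Finset.sum_sub_distrib,
      Finset.sum_ite_eq Finset.univ v (fun w => f v w)]
    simp
  rw [Finset.sum_congr rfl (fun v _ => h2 v), Finset.sum_sub_distrib]

lemma construct {n : ℕ} (hn : 0 < n) (t c : ℝ) (hc0 : 0 ≤ c) (hct : c ≤ t) (ht1 : t ≤ 1)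
    (h2t : 2*t - 1 ≤ c) (hD : 0 ≤ t + ((n : ℝ)-1)*c - n*t^2) :
    ∃ p : Corr n, IsVect p ∧ IsSync p ∧ HasMarginals p t ∧
      Fval (⊤ : SimpleGraph (Fin n)) p = ((n:ℝ)^2 - n) * c := by
  have hnR : (0:ℝ) < n := by exact_mod_cast hn
  set α : ℝ := Real.sqrt (t - c) with hα
  set β : ℝ := (Real.sqrt (t + ((n : ℝ)-1)*c - n*t^2) - α) / n with hβ
  have kα : α * α = t - c := Real.mul_self_sqrt (by linarith)
  have kβ : (n:ℝ)*(β*β) + 2*(α*β) = c - t^2 := by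
    have h1 : (n:ℝ)*β + α = Real.sqrt (t + ((n : ℝ)-1)*c - n*t^2) := by
      rw [hβ]; field_simp; ring
    have h2 : ((n:ℝ)*β + α)^2 = t + ((n : ℝ)-1)*c - n*t^2 := by
      rw [h1, Real.sq_sqrt hD]
    nlinarith [h2, kα]
  -- the vectors
  set u : Fin n → EuclideanSpace ℝ (Fin (n+1)) :=
    fun v => WithLp.toLp 2 (fun k : Fin (n+1) => (Fin.cases t (fun j => β + if j = v then α else 0) k : ℝ)) with hu
  set h : EuclideanSpace ℝ (Fin (n+1)) := WithLp.toLp 2 (fun k : Fin (n+1) => (Fin.cases (1:ℝ) (fun _ => 0) k : ℝ)) with hh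
  have huu : ∀ v w, (inner ℝ (u v) (u w) : ℝ) = if v = w then t else c := by
    intro v w
    rw [PiLp.inner_apply]
    simp only [inner_real', hu, PiLp.toLp_apply]
    rw [Fin.sum_univ_succ]
    simp only [Fin.cases_zero, Fin.cases_succ]
    have e1 : ∀ j : Fin n, (β + if j = v then α else 0) * (β + if j = w then α else 0)
        = β*β + (β * (if j = w then α else 0) + ((if j = v then α else 0) * β
          + (if j = v then α else 0) * (if j = w then α else 0))) := by
      intro j; ring
    rw [Finset.sum_congr rfl (fun j _ => e1 j)]
    rw [Finset.sum_add_distrib, Finset.sum_add_distrib, Finset.sum_add_distrib,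
      Finset.sum_const, ← Finset.mul_sum, ← Finset.sum_mul]
    have h1 : ∑ j : Fin n, (if j = v then α else 0) = α := by
      rw [Finset.sum_ite_eq' Finset.univ v (fun _ => α)]; simp
    have h2 : ∑ j : Fin n, (if j = w then α else 0) = α := by
      rw [Finset.sum_ite_eq' Finset.univ w (fun _ => α)]; simp
    have h3 : ∑ j : Fin n, (if j = v then α else 0) * (if j = w then α else 0)
        = if v = w then α * α else 0 := by
      rcases eq_or_ne v w with hvw | hvw
      · subst hvw
        rw [if_pos rfl]
        have e2 : ∀ j : Fin n, (if j = v then α else 0) * (if j = v then α else 0)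
            = if j = v then α * α else 0 := by
          intro j; by_cases hj : j = v <;> simp [hj]
        rw [Finset.sum_congr rfl (fun j _ => e2 j),
          Finset.sum_ite_eq' Finset.univ v (fun _ => α * α)]
        simp
      · rw [if_neg hvw]
        apply Finset.sum_eq_zero
        intro j _
        by_cases hj : j = v
        · subst hj; simp [hvw]
        · simp [hj]
    rw [h1, h2, h3]
    simp only [Finset.card_univ, Fintype.card_fin, nsmul_eq_mul]
    rcases eq_or_ne v w with hvw | hvw
    · rw [if_pos hvw, if_pos hvw]; nlinarith [kα, kβ]
    · rw [if_neg hvw, if_neg hvw]; nlinarith [kβ]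
  have huh : ∀ v, (inner ℝ (u v) h : ℝ) = t := by
    intro v
    rw [PiLp.inner_apply]
    simp only [inner_real', hu, hh, PiLp.toLp_apply]
    rw [Fin.sum_univ_succ]
    simp only [Fin.cases_zero, Fin.cases_succ]
    simp
  have hhu : ∀ v, (inner ℝ h (u v) : ℝ) = t := by
    intro v; rw [real_inner_comm]; exact huh v
  have hhh : (inner ℝ h h : ℝ) = 1 := by
    rw [PiLp.inner_apply]
    simp only [inner_real', hh, PiLp.toLp_apply]
    rw [Fin.sum_univ_succ]
    simp only [Fin.cases_zero, Fin.cases_succ]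
    simp
  have hnorm : ‖h‖ = 1 := by
    rw [norm_eq_sqrt_real_inner, hhh, Real.sqrt_one]
  -- the correlation
  set q : Fin n → Fin n → ℝ := fun v w => if v = w then t else c with hq
  set p : Corr n := fun i j v w =>
    if i = 0 then (if j = 0 then q v w else t - q v w)
    else (if j = 0 then t - q v w else 1 - 2*t + q v w) with hp
  have hp00 : ∀ v w, p 0 0 v w = q v w := fun v w => by simp [hp]
  have hp01 : ∀ v w, p 0 1 v w = t - q v w := fun v w => by norm_num [hp]
  have hp10 : ∀ v w, p 1 0 v w = t - q v w := fun v w => by norm_num [hp]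
  have hp11 : ∀ v w, p 1 1 v w = 1 - 2*t + q v w := fun v w => by norm_num [hp]
  have hqd : ∀ v : Fin n, q v v = t := fun v => by simp [hq]
  have hq_le : ∀ v w, q v w ≤ t := by
    intro v w; rcases eq_or_ne v w with hvw | hvw <;> simp [hq, hvw, hct]
  have hq_ge : ∀ v w, 2*t - 1 ≤ q v w := by
    intro v w; rcases eq_or_ne v w with hvw | hvw <;> simp [hq, hvw] <;> linarith
  have hq_nn : ∀ v w, 0 ≤ q v w := by
    intro v w; rcases eq_or_ne v w with hvw | hvw <;> simp [hq, hvw] <;> linarith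
  -- the x/y vectors
  set xf : Fin n → Fin 2 → EuclideanSpace ℝ (Fin (n+1)) :=
    fun v i => if i = 0 then u v else h - u v with hxf
  have hx0 : ∀ v, xf v 0 = u v := fun v => if_pos rfl
  have hx1 : ∀ v, xf v 1 = h - u v := fun v => if_neg (by decide)
  refine ⟨p, ⟨?_⟩, ?_, ?_, ?_⟩
  · refine
      { H := EuclideanSpace ℝ (Fin (n+1))
        x := xf, y := xf, h := h
        hnorm := hnorm
        hxorth := ?_, hyorth := ?_, hxsum := ?_, hysum := ?_, hval := ?_, hnn := ?_ }
    · intro v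
      rw [hx0, hx1, inner_sub_right, huh v, huu v v, if_pos rfl]; ring
    · intro v
      rw [hx0, hx1, inner_sub_right, huh v, huu v v, if_pos rfl]; ring
    · intro v; rw [hx0, hx1]; abel
    · intro v; rw [hx0, hx1]; abel
    · intro i j v w
      fin_cases i <;> fin_cases j
      · show p 0 0 v w = inner ℝ (xf v 0) (xf w 0)
        rw [hx0, hx0, hp00, huu v w]
      · show p 0 1 v w = inner ℝ (xf v 0) (xf w 1)
        rw [hx0, hx1, hp01, inner_sub_right, huh v, huu v w]
      · show p 1 0 v w = inner ℝ (xf v 1) (xf w 0)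
        rw [hx1, hx0, hp10, inner_sub_left, hhu w, huu v w]
      · show p 1 1 v w = inner ℝ (xf v 1) (xf w 1)
        rw [hx1, hx1, hp11, inner_sub_left, inner_sub_right, inner_sub_right,
          hhh, hhu w, huh v, huu v w]
        ring
    · intro i j v w
      fin_cases i <;> fin_cases j
      · show 0 ≤ p 0 0 v w
        rw [hp00]; exact hq_nn v w
      · show 0 ≤ p 0 1 v w
        rw [hp01]; linarith [hq_le v w]
      · show 0 ≤ p 1 0 v w
        rw [hp10]; linarith [hq_le v w]
      · show 0 ≤ p 1 1 v w
        rw [hp11]; linarith [hq_ge v w]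
  · intro v
    constructor
    · rw [hp01, hqd]; ring
    · rw [hp10, hqd]; ring
  · constructor
    · intro v w
      rw [Fin.sum_univ_two, hp00, hp01]; ring
    · intro v w
      rw [Fin.sum_univ_two, hp00, hp10]; ring
  · have e : Fval (⊤ : SimpleGraph (Fin n)) p
        = (∑ v, ∑ w, q v w) - ∑ v : Fin n, q v v := by
      rw [Fval, Finset.sum_congr rfl (fun vw _ => hp00 vw.1 vw.2)]
      exact offdiag_sum q
    rw [e]
    have h1 : ∀ v : Fin n, ∑ w, q v w = t + ((n:ℝ) - 1) * c := by
      intro v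
      have e2 : ∀ w, q v w = c + if v = w then t - c else 0 := by
        intro w; rcases eq_or_ne v w with hvw | hvw <;> simp [hq, hvw]
      rw [Finset.sum_congr rfl (fun w _ => e2 w), Finset.sum_add_distrib, Finset.sum_const,
        Finset.sum_ite_eq Finset.univ v (fun _ => t - c)]
      simp only [Finset.card_univ, Fintype.card_fin, nsmul_eq_mul, Finset.mem_univ, if_pos]
      ring
    rw [Finset.sum_congr rfl (fun v _ => h1 v), Finset.sum_congr rfl (fun v _ => hqd v),
      Finset.sum_const, Finset.sum_const]
    simp only [Finset.card_univ, Fintype.card_fin, nsmul_eq_mul]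
    ring


lemma lower_bound {n : ℕ} (t : ℝ) (p : Corr n) (hv : IsVect p) (hs : IsSync p)
    (hm : HasMarginals p t) :
    (0 ≤ Fval (⊤ : SimpleGraph (Fin n)) p) ∧
    ((n:ℝ)*t*((n:ℝ)*t - 1) ≤ Fval (⊤ : SimpleGraph (Fin n)) p) ∧
    (((n:ℝ)^2 - (n:ℝ))*(2*t - 1) ≤ Fval (⊤ : SimpleGraph (Fin n)) p) := by
  obtain ⟨R⟩ := hv
  letI : NormedAddCommGroup R.H := R.nacg
  letI : InnerProductSpace ℝ R.H := R.ips
  have hval' : ∀ i j v w, p i j v w = (inner ℝ (R.x v i) (R.y w j) : ℝ) := R.hval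
  have hxorth' : ∀ v, (inner ℝ (R.x v 0) (R.x v 1) : ℝ) = 0 := R.hxorth
  have hyorth' : ∀ w, (inner ℝ (R.y w 0) (R.y w 1) : ℝ) = 0 := R.hyorth
  have hhh : (inner ℝ R.h R.h : ℝ) = 1 := by
    rw [real_inner_self_eq_norm_mul_norm, R.hnorm]; norm_num
  have hxh : ∀ v, (inner ℝ (R.x v 0) R.h : ℝ) = t := by
    intro v
    have h1 := hm.1 v v
    rw [Fin.sum_univ_two, hval' 0 0 v v, hval' 0 1 v v, ← inner_add_right,
      R.hysum v] at h1
    exact h1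
  have hhy : ∀ w, (inner ℝ R.h (R.y w 0) : ℝ) = t := by
    intro w
    have h1 := hm.2 w w
    rw [Fin.sum_univ_two, hval' 0 0 w w, hval' 1 0 w w, ← inner_add_left,
      R.hxsum w] at h1
    exact h1
  have hxx : ∀ v, (inner ℝ (R.x v 0) (R.x v 0) : ℝ) = t := by
    intro v
    have h1 := hxh v
    rw [← R.hxsum v, inner_add_right, hxorth' v, add_zero] at h1
    exact h1
  have hyy : ∀ w, (inner ℝ (R.y w 0) (R.y w 0) : ℝ) = t := by
    intro w
    have h1 := hhy w
    rw [← R.hysum w, inner_add_left] at h1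
    have hc : (inner ℝ (R.y w 1) (R.y w 0) : ℝ) = inner ℝ (R.y w 0) (R.y w 1) :=
      real_inner_comm _ _
    rw [hc, hyorth' w, add_zero] at h1
    exact h1
  have hxyd : ∀ v, (inner ℝ (R.x v 0) (R.y v 0) : ℝ) = t := by
    intro v
    have h1 := hxh v
    rw [← R.hysum v, inner_add_right] at h1
    have h2 : (inner ℝ (R.x v 0) (R.y v 1) : ℝ) = 0 := by
      rw [← hval' 0 1 v v]; exact (hs v).1
    rw [h2, add_zero] at h1
    exact h1
  have heq : ∀ v, R.y v 0 = R.x v 0 := by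
    intro v
    have h1 : (inner ℝ (R.x v 0 - R.y v 0) (R.x v 0 - R.y v 0) : ℝ) = 0 := by
      have hc : (inner ℝ (R.y v 0) (R.x v 0) : ℝ) = inner ℝ (R.x v 0) (R.y v 0) :=
        real_inner_comm _ _
      rw [inner_sub_left, inner_sub_right, inner_sub_right, hc, hxx v, hyy v, hxyd v]
      ring
    have h2 : R.x v 0 - R.y v 0 = 0 := inner_self_eq_zero.mp h1
    have := sub_eq_zero.mp h2
    exact this.symm
  set g : Fin n → Fin n → ℝ := fun v w => (inner ℝ (R.x v 0) (R.x w 0) : ℝ) with hg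
  have hpg : ∀ v w, p 0 0 v w = g v w := by
    intro v w
    rw [hval' 0 0 v w, heq w]
  have hF : Fval (⊤ : SimpleGraph (Fin n)) p = (∑ v, ∑ w, g v w) - (n : ℝ) * t := by
    rw [Fval, Finset.sum_congr rfl (fun vw _ => hpg vw.1 vw.2), offdiag_sum g]
    congr 1
    rw [Finset.sum_congr rfl (fun v _ => hxx v), Finset.sum_const]
    simp [Finset.card_univ, nsmul_eq_mul]
  refine ⟨?_, ?_, ?_⟩
  · exact Finset.sum_nonneg fun vw _ => R.hnn 0 0 vw.1 vw.2
  · -- Cauchy-Schwarz bound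
    set S : R.H := ∑ v, R.x v 0 with hS
    have hSS : (inner ℝ S S : ℝ) = ∑ v, ∑ w, g v w := by
      rw [hS, sum_inner]
      exact Finset.sum_congr rfl fun v _ => by rw [inner_sum]
    have hSh : (inner ℝ S R.h : ℝ) = (n : ℝ) * t := by
      rw [hS, sum_inner, Finset.sum_congr rfl (fun v _ => hxh v), Finset.sum_const]
      simp [Finset.card_univ, nsmul_eq_mul]
    have hcs := real_inner_mul_inner_self_le S R.h
    rw [hSh, hhh, mul_one] at hcs
    rw [hF, ← hSS]
    nlinarith [hcs]
  · -- termwise bound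
    have hterm : ∀ v w : Fin n, 2*t - 1 ≤ p 0 0 v w := by
      intro v w
      have hx1 : R.x v 1 = R.h - R.x v 0 := by
        rw [← R.hxsum v]; abel
      have hy1 : R.y w 1 = R.h - R.y w 0 := by
        rw [← R.hysum w]; abel
      have h11 : p 1 1 v w = 1 - 2*t + p 0 0 v w := by
        rw [hval' 1 1 v w, hx1, hy1, inner_sub_left, inner_sub_right, inner_sub_right,
          hhh, hhy w, hxh v, ← hval' 0 0 v w]
        ring
      linarith [R.hnn 1 1 v w]
    calc ((n:ℝ)^2 - (n:ℝ))*(2*t - 1)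
        = (∑ _v : Fin n, ∑ _w : Fin n, (2*t-1)) - ∑ _v : Fin n, (2*t-1) := by
          simp only [Finset.sum_const, Finset.card_univ, Fintype.card_fin, nsmul_eq_mul]
          ring
      _ = ∑ vw ∈ edgeFinset' (⊤ : SimpleGraph (Fin n)), (2*t-1) :=
          (offdiag_sum fun _ _ => 2*t-1).symm
      _ ≤ Fval (⊤ : SimpleGraph (Fin n)) p :=
          Finset.sum_le_sum fun vw _ => hterm vw.1 vw.2


/-- On the complete graph `K_n = (⊤ : SimpleGraph (Fin n))` (whose ordered edge set consists of
all pairs `(v,w)` with `v ≠ w`, so `|E| = n² - n`), the function `f_vect` is given piecewise. -/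
theorem stmt9 {n : ℕ} (hn : 3 ≤ n) (t : ℝ) :
    (0 ≤ t → t ≤ 1 / n → fvect (⊤ : SimpleGraph (Fin n)) t = 0) ∧
    (1 / n ≤ t → t ≤ (n - 1) / n →
      fvect (⊤ : SimpleGraph (Fin n)) t = n * t * (n * t - 1)) ∧
    ((n - 1) / n ≤ t → t ≤ 1 →
      fvect (⊤ : SimpleGraph (Fin n)) t = ((n : ℝ) ^ 2 - n) * (2 * t - 1)) := by
  have hn0 : 0 < n := by omega
  have hnR : (3:ℝ) ≤ (n:ℝ) := by exact_mod_cast hn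
  have hnR0 : (0:ℝ) < (n:ℝ) := by linarith
  refine ⟨?_, ?_, ?_⟩
  · -- regime 1 : 0 ≤ t ≤ 1/n, value 0
    intro ht0 ht1
    have hnt : t * (n:ℝ) ≤ 1 := (le_div_iff₀ hnR0).mp ht1
    obtain ⟨p, h1, h2, h3, h4⟩ := construct hn0 t 0 le_rfl ht0
      (by nlinarith [mul_nonneg ht0 (by linarith : (0:ℝ) ≤ (n:ℝ) - 3)])
      (by nlinarith [mul_nonneg ht0 (by linarith : (0:ℝ) ≤ (n:ℝ) - 3)])
      (by nlinarith [mul_nonneg ht0 (by linarith : (0:ℝ) ≤ 1 - t * (n:ℝ))])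
    have h4' : Fval (⊤ : SimpleGraph (Fin n)) p = 0 := by rw [h4]; ring
    have hmem : (0:ℝ) ∈ {s | ∃ p : Corr n, IsVect p ∧ IsSync p ∧ HasMarginals p t ∧
        s = Fval (⊤ : SimpleGraph (Fin n)) p} := ⟨p, h1, h2, h3, h4'.symm⟩
    have hlb : ∀ s ∈ {s | ∃ p : Corr n, IsVect p ∧ IsSync p ∧ HasMarginals p t ∧
        s = Fval (⊤ : SimpleGraph (Fin n)) p}, (0:ℝ) ≤ s := by
      rintro s ⟨p', hp1, hp2, hp3, rfl⟩
      exact (lower_bound t p' hp1 hp2 hp3).1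
    exact le_antisymm (csInf_le ⟨0, hlb⟩ hmem) (le_csInf ⟨0, hmem⟩ hlb)
  · -- regime 2 : 1/n ≤ t ≤ (n-1)/n, value n t (n t - 1)
    intro ht1 ht2
    have h1n : 1 ≤ (n:ℝ) * t := by nlinarith [(div_le_iff₀ hnR0).mp ht1]
    have h2n : (n:ℝ) * t ≤ (n:ℝ) - 1 := by nlinarith [(le_div_iff₀ hnR0).mp ht2]
    have ht0 : 0 ≤ t := by nlinarith
    have hn1 : (0:ℝ) < (n:ℝ) - 1 := by linarith
    set c : ℝ := t * ((n:ℝ) * t - 1) / ((n:ℝ) - 1) with hc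
    have hkey : ((n:ℝ) - 1) * c = t * ((n:ℝ) * t - 1) := by
      rw [hc]; field_simp
    obtain ⟨p, h1, h2, h3, h4⟩ := construct hn0 t c
      (div_nonneg (mul_nonneg ht0 (by linarith)) (le_of_lt hn1))
      (by rw [hc, div_le_iff₀ hn1]
          nlinarith [mul_nonneg ht0 (by linarith : (0:ℝ) ≤ ((n:ℝ)-1) - ((n:ℝ)*t-1))])
      (by nlinarith)
      (by rw [hc, le_div_iff₀ hn1]
          have hint : (0:ℝ) ≤ (1 - t) * (((n:ℝ)-1) - (n:ℝ)*t) :=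
            mul_nonneg (by nlinarith) (by linarith)
          nlinarith [hint])
      (by nlinarith [hkey])
    have h4' : Fval (⊤ : SimpleGraph (Fin n)) p = (n:ℝ) * t * ((n:ℝ) * t - 1) := by
      rw [h4]
      have e : ((n:ℝ)^2 - n) * c = (n:ℝ) * (((n:ℝ) - 1) * c) := by ring
      rw [e, hkey]; ring
    have hmem : ((n:ℝ) * t * ((n:ℝ) * t - 1)) ∈ {s | ∃ p : Corr n,
        IsVect p ∧ IsSync p ∧ HasMarginals p t ∧
        s = Fval (⊤ : SimpleGraph (Fin n)) p} := ⟨p, h1, h2, h3, h4'.symm⟩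
    have hlb : ∀ s ∈ {s | ∃ p : Corr n, IsVect p ∧ IsSync p ∧ HasMarginals p t ∧
        s = Fval (⊤ : SimpleGraph (Fin n)) p}, (n:ℝ) * t * ((n:ℝ) * t - 1) ≤ s := by
      rintro s ⟨p', hp1, hp2, hp3, rfl⟩
      exact (lower_bound t p' hp1 hp2 hp3).2.1
    exact le_antisymm (csInf_le ⟨_, hlb⟩ hmem) (le_csInf ⟨_, hmem⟩ hlb)
  · -- regime 3 : (n-1)/n ≤ t ≤ 1, value (n²-n)(2t-1)
    intro ht1 ht2
    have h1n : (n:ℝ) - 1 ≤ (n:ℝ) * t := by nlinarith [(div_le_iff₀ hnR0).mp ht1]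
    have hc0 : (0:ℝ) ≤ 2 * t - 1 := by nlinarith
    obtain ⟨p, h1, h2, h3, h4⟩ := construct hn0 t (2 * t - 1) hc0
      (by linarith) ht2 le_rfl
      (by have hint : (0:ℝ) ≤ (1 - t) * ((n:ℝ) * t - (n:ℝ) + 1) :=
            mul_nonneg (by linarith) (by linarith)
          nlinarith [hint])
    have hmem : (((n:ℝ)^2 - n) * (2 * t - 1)) ∈ {s | ∃ p : Corr n,
        IsVect p ∧ IsSync p ∧ HasMarginals p t ∧
        s = Fval (⊤ : SimpleGraph (Fin n)) p} := ⟨p, h1, h2, h3, h4.symm⟩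
    have hlb : ∀ s ∈ {s | ∃ p : Corr n, IsVect p ∧ IsSync p ∧ HasMarginals p t ∧
        s = Fval (⊤ : SimpleGraph (Fin n)) p}, ((n:ℝ)^2 - n) * (2 * t - 1) ≤ s := by
      rintro s ⟨p', hp1, hp2, hp3, rfl⟩
      exact (lower_bound t p' hp1 hp2 hp3).2.2
    exact le_antisymm (csInf_le ⟨_, hlb⟩ hmem) (le_csInf ⟨_, hmem⟩ hlb)
end

section
/- Let n,k ≥ 1, let H be a Hilbert space and let x_{v,i}, y_{w,j}, h ∈ H (1 ≤ v,w ≤ n, 1 ≤ i,j ≤ k) satisfy ‖h‖ = 1; ⟨x_{v,i}, x_{v,j}⟩ = 0 for all v and all i ≠ j; ⟨y_{w,i}, y_{w,j}⟩ = 0 for all w and all i ≠ j; h = Σ_i x_{v,i} = Σ_j y_{w,j} for all v,w; and ⟨x_{v,i}, y_{w,j}⟩ ≥ 0 for all v,w,i,j. If the resulting vectorial correlation p(i,j|v,w) = ⟨x_{v,i}, y_{w,j}⟩ is synchronous, i.e., ⟨x_{v,i}, y_{v,j}⟩ = 0 for every v and all i ≠ j, then x_{v,i} = y_{v,i} for all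 v and all i. -/
open scoped BigOperators RealInnerProductSpace

/-- If vectors in a real Hilbert space realize a synchronous vectorial correlation, then
`x_{v,i} = y_{v,i}` for all `v` and `i`. -/
theorem stmt18 {n k : ℕ} (hn : 1 ≤ n) (hk : 1 ≤ k)
    {H : Type*} [NormedAddCommGroup H] [InnerProductSpace ℝ H] [CompleteSpace H]
    (x : Fin n → Fin k → H) (y : Fin n → Fin k → H) (h : H)
    (hnorm : ‖h‖ = 1)
    (hxorth : ∀ (v : Fin n) (i j : Fin k), i ≠ j → ⟪x v i, x v j⟫ = 0)
    (hyorth : ∀ (w : Fin n) (i j : Fin k), i ≠ j → ⟪y w i, y w j⟫ = 0)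
    (hxsum : ∀ v : Fin n, ∑ i, x v i = h)
    (hysum : ∀ w : Fin n, ∑ j, y w j = h)
    (hnn : ∀ (v w : Fin n) (i j : Fin k), 0 ≤ ⟪x v i, y w j⟫)
    (hsync : ∀ (v : Fin n) (i j : Fin k), i ≠ j → ⟪x v i, y v j⟫ = 0) :
    ∀ (v : Fin n) (i : Fin k), x v i = y v i := by
  intro v i
  have hx : ⟪x v i, x v i⟫ = ⟪x v i, y v i⟫ := by
    have h1 : ⟪x v i, h⟫ = ⟪x v i, x v i⟫ := by
      rw [← hxsum v, inner_sum]
      rw [Finset.sum_eq_single i (fun j _ hji => hxorth v i j (Ne.symm hji))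
        (fun hi => absurd (Finset.mem_univ i) hi)]
    have h2 : ⟪x v i, h⟫ = ⟪x v i, y v i⟫ := by
      rw [← hysum v, inner_sum]
      rw [Finset.sum_eq_single i (fun j _ hji => hsync v i j (Ne.symm hji))
        (fun hi => absurd (Finset.mem_univ i) hi)]
    rw [← h1, h2]
  have hy : ⟪y v i, y v i⟫ = ⟪x v i, y v i⟫ := by
    have h1 : ⟪h, y v i⟫ = ⟪y v i, y v i⟫ := by
      rw [← hysum v, sum_inner]
      rw [Finset.sum_eq_single i (fun j _ hji => hyorth v j i hji)
        (fun hi => absurd (Finset.mem_univ i) hi)]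
    have h2 : ⟪h, y v i⟫ = ⟪x v i, y v i⟫ := by
      rw [← hxsum v, sum_inner]
      rw [Finset.sum_eq_single i (fun j _ hji => hsync v j i hji)
        (fun hi => absurd (Finset.mem_univ i) hi)]
    rw [← h1, h2]
  have hzero : ⟪x v i - y v i, x v i - y v i⟫ = 0 := by
    simp only [inner_sub_left, inner_sub_right]
    rw [hx, hy, real_inner_comm (y v i) (x v i)]
    ring
  have := inner_self_eq_zero.mp hzero
  exact sub_eq_zero.mp this
end

section
/- Let m ≥ 1 and let x₁,…,xₙ ∈ ℝ^m be unit vectors. Then there exist d ≥ 1 and projections P_{v,i} ∈ M_d(ℂ) (for v ∈ {1,…,n} and i ∈ {0,1}) with P_{v,0} + P_{v,1} = I for every v, such that (1/d)·Tr(P_{v,i}P_{w,j}) = (1/4)·(1 + (−1)^{i+j}⟨x_v, x_w⟩) for all v,w ∈ {1,…,n} and all i,j ∈ {0,1}. -/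
open scoped BigOperators

namespace Stmt19Aux

variable {m : ℕ}

/-- sign factor: (-1)^{#{j < k : s j}} as a product. -/
noncomputable def sgn (k : Fin m) (s : Fin m → Bool) : ℂ :=
  ∏ j : Fin m, (if j < k ∧ s j then (-1 : ℂ) else 1)

/-- flip the k-th bit. -/
def flp (k : Fin m) (s : Fin m → Bool) : Fin m → Bool :=
  Function.update s k (!(s k))

lemma flp_apply_self (k : Fin m) (s) : flp k s k = !(s k) := by
  simp [flp]

lemma flp_apply_ne (k : Fin m) (s) {j : Fin m} (h : j ≠ k) : flp k s j = s j := by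
  simp [flp, Function.update_of_ne h]

lemma flp_flp (k : Fin m) (s) : flp k (flp k s) = s := by
  funext j
  by_cases h : j = k
  · subst h; simp [flp]
  · simp [flp, Function.update_of_ne h]

lemma flp_ne (k : Fin m) (s) : flp k s ≠ s := by
  intro h
  have := congrFun h k
  simp [flp] at this

lemma flp_comm {k l : Fin m} (h : k ≠ l) (s) :
    flp k (flp l s) = flp l (flp k s) := by
  funext j
  by_cases hk : j = k
  · subst hk
    rw [flp_apply_self, flp_apply_ne l _ h, flp_apply_ne l _ h, flp_apply_self]
  · by_cases hl : j = l
    · subst hl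
      rw [flp_apply_ne k _ (Ne.symm h), flp_apply_self, flp_apply_self,
        flp_apply_ne k _ (Ne.symm h)]
    · rw [flp_apply_ne k _ hk, flp_apply_ne l _ hl, flp_apply_ne l _ hl,
        flp_apply_ne k _ hk]

lemma sgn_mul_self (k : Fin m) (s) : sgn k s * sgn k s = 1 := by
  rw [sgn, ← Finset.prod_mul_distrib]
  apply Finset.prod_eq_one
  intro j _
  split <;> norm_num

lemma star_sgn (k : Fin m) (s) : star (sgn k s) = sgn k s := by
  rw [sgn, star_prod]
  apply Finset.prod_congr rfl
  intro j _
  split <;> simp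

lemma sgn_flp (k l : Fin m) (s) :
    sgn k (flp l s) = (if l < k then (-1 : ℂ) else 1) * sgn k s := by
  rw [sgn, sgn, ← Finset.mul_prod_erase Finset.univ _ (Finset.mem_univ l),
    ← Finset.mul_prod_erase Finset.univ _ (Finset.mem_univ l)]
  have herase : ∀ j ∈ Finset.univ.erase l,
      (if j < k ∧ flp l s j then (-1 : ℂ) else 1) = (if j < k ∧ s j then (-1 : ℂ) else 1) := by
    intro j hj
    rw [flp_apply_ne l s (Finset.ne_of_mem_erase hj)]
  rw [Finset.prod_congr rfl herase, flp_apply_self]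
  by_cases hl : l < k
  · by_cases hs : s l <;> simp [hl, hs] <;> ring
  · by_cases hs : s l <;> simp [hl, hs]

lemma sgn_flp_self (k : Fin m) (s) : sgn k (flp k s) = sgn k s := by
  rw [sgn_flp, if_neg (lt_irrefl k), one_mul]

/-- Jordan–Wigner gamma matrix. -/
noncomputable def gam (k : Fin m) : Matrix (Fin m → Bool) (Fin m → Bool) ℂ :=
  Matrix.of fun s t => if t = flp k s then sgn k s else 0

lemma gam_mul_apply (k l : Fin m) (s t) :
    (gam k * gam l) s t =
      if t = flp l (flp k s) then sgn k s * sgn l (flp k s) else 0 := by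
  rw [Matrix.mul_apply, Finset.sum_eq_single_of_mem (flp k s) (Finset.mem_univ _)]
  · simp only [gam, Matrix.of_apply, if_pos rfl]
    by_cases h : t = flp l (flp k s) <;> simp [h]
  · intro u _ hu
    simp [gam, hu]

lemma gam_sq (k : Fin m) : gam k * gam k = 1 := by
  ext s t
  rw [gam_mul_apply, flp_flp, sgn_flp_self, sgn_mul_self, Matrix.one_apply]
  simp [eq_comm]

lemma gam_anticomm {k l : Fin m} (h : k ≠ l) :
    gam k * gam l = -(gam l * gam k) := by
  ext s t
  rw [Matrix.neg_apply, gam_mul_apply, gam_mul_apply, flp_comm (Ne.symm h)]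
  by_cases ht : t = flp k (flp l s)
  · rw [if_pos ht, if_pos ht]
    rw [sgn_flp l k s, sgn_flp k l s]
    rcases h.lt_or_gt with hkl | hkl
    · rw [if_pos hkl, if_neg (asymm hkl)]; ring
    · rw [if_neg (asymm hkl), if_pos hkl]; ring
  · rw [if_neg ht, if_neg ht, neg_zero]

lemma trace_gam (k : Fin m) : (gam k).trace = 0 := by
  rw [Matrix.trace]
  apply Finset.sum_eq_zero
  intro s _
  simp [Matrix.diag, gam, (flp_ne k s).symm]

lemma trace_gam_mul (k l : Fin m) :
    (gam k * gam l).trace = if k = l then ((2 : ℂ) ^ m) else 0 := by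
  by_cases h : k = l
  · subst h
    rw [gam_sq, if_pos rfl, Matrix.trace_one]
    simp [Fintype.card_fun]
  · rw [if_neg h, Matrix.trace]
    apply Finset.sum_eq_zero
    intro s _
    have hne : s ≠ flp l (flp k s) := by
      intro hs
      have := congrFun hs k
      rw [flp_apply_ne l _ h, flp_apply_self] at this
      simp at this
    simp [Matrix.diag, gam_mul_apply, hne]

lemma gam_herm (k : Fin m) : (gam k).IsHermitian := by
  rw [Matrix.IsHermitian]
  ext s t
  simp only [Matrix.conjTranspose_apply, gam, Matrix.of_apply]
  by_cases h : t = flp k s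
  · subst h
    rw [if_pos (flp_flp k s).symm, if_pos rfl, star_sgn, sgn_flp_self]
  · rw [if_neg h, if_neg, star_zero]
    intro hs
    exact h (by rw [hs, flp_flp])

/-- The Clifford operator of a vector. -/
noncomputable def CC (a : Fin m → ℝ) : Matrix (Fin m → Bool) (Fin m → Bool) ℂ :=
  ∑ k, (a k : ℂ) • gam k

lemma CC_herm (a : Fin m → ℝ) : (CC a).IsHermitian := by
  rw [Matrix.IsHermitian, CC, Matrix.conjTranspose_sum]
  apply Finset.sum_congr rfl
  intro k _
  rw [Matrix.conjTranspose_smul, (gam_herm k), Complex.star_def, Complex.conj_ofReal]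

lemma trace_CC (a : Fin m → ℝ) : (CC a).trace = 0 := by
  rw [CC, Matrix.trace_sum]
  apply Finset.sum_eq_zero
  intro k _
  rw [Matrix.trace_smul, trace_gam, smul_zero]

lemma CC_mul (a b : Fin m → ℝ) :
    CC a * CC b = ∑ k, ∑ l, ((a k : ℂ) * (b l : ℂ)) • (gam k * gam l) := by
  rw [CC, CC, Finset.sum_mul]
  apply Finset.sum_congr rfl
  intro k _
  rw [Finset.mul_sum]
  apply Finset.sum_congr rfl
  intro l _
  rw [Matrix.smul_mul, Matrix.mul_smul, smul_smul]

lemma trace_CC_mul (a b : Fin m → ℝ) :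
    (CC a * CC b).trace = (2 : ℂ) ^ m * ∑ k, (a k : ℂ) * (b k : ℂ) := by
  rw [CC_mul, Matrix.trace_sum]
  rw [Finset.mul_sum]
  apply Finset.sum_congr rfl
  intro k _
  rw [Matrix.trace_sum]
  rw [Finset.sum_congr rfl (fun l _ => by rw [Matrix.trace_smul, trace_gam_mul])]
  simp [Finset.sum_ite_eq, mul_comm]

lemma CC_sq (a : Fin m → ℝ) (h : ∑ k, a k * a k = 1) : CC a * CC a = 1 := by
  have key : CC a * CC a + CC a * CC a = (2 : ℂ) • (1 : Matrix (Fin m → Bool) (Fin m → Bool) ℂ) := by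
    nth_rewrite 2 [CC_mul]
    rw [Finset.sum_comm]
    rw [CC_mul, ← Finset.sum_add_distrib]
    have : ∀ k ∈ Finset.univ, (∑ l, ((a k : ℂ) * (a l : ℂ)) • (gam k * gam l))
        + (∑ l, ((a l : ℂ) * (a k : ℂ)) • (gam l * gam k))
        = ((2 : ℂ) * ((a k : ℂ) * (a k : ℂ))) • 1 := by
      intro k _
      rw [← Finset.sum_add_distrib]
      rw [Finset.sum_eq_single_of_mem k (Finset.mem_univ k)]
      · rw [gam_sq, two_mul, add_smul]
      · intro l _ hl
        rw [gam_anticomm (Ne.symm hl), mul_comm (a l : ℂ)]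
        rw [smul_neg, neg_add_cancel]
    rw [Finset.sum_congr rfl this, ← Finset.sum_smul]
    congr 1
    have : ∑ k, (2 : ℂ) * ((a k : ℂ) * (a k : ℂ)) = 2 * ∑ k, (a k : ℂ) * (a k : ℂ) := by
      rw [Finset.mul_sum]
    rw [this]
    have : ∑ k, (a k : ℂ) * (a k : ℂ) = 1 := by
      exact_mod_cast congrArg (Complex.ofReal) h
    rw [this, mul_one]
  have h2 : (2 : ℂ) • (CC a * CC a) = (2 : ℂ) • (1 : Matrix (Fin m → Bool) (Fin m → Bool) ℂ) := by
    rw [two_smul, key]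
  exact smul_right_injective _ (two_ne_zero) h2


lemma eps_sq (i : Fin 2) : ((-1 : ℂ) ^ (i : ℕ)) * ((-1 : ℂ) ^ (i : ℕ)) = 1 := by
  rw [← pow_add]
  exact Even.neg_one_pow ⟨(i : ℕ), rfl⟩

/-- The projection `(1 + (-1)^i C(a))/2`. -/
noncomputable def QQ (a : Fin m → ℝ) (i : Fin 2) :
    Matrix (Fin m → Bool) (Fin m → Bool) ℂ :=
  (2 : ℂ)⁻¹ • (1 + ((-1 : ℂ) ^ (i : ℕ)) • CC a)

lemma expand_mul (C D : Matrix (Fin m → Bool) (Fin m → Bool) ℂ) (ε δ : ℂ) :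
    (1 + ε • C) * (1 + δ • D) = 1 + δ • D + ε • C + (ε * δ) • (C * D) := by
  rw [add_mul, one_mul, mul_add, mul_one, Matrix.smul_mul, Matrix.mul_smul, smul_smul]
  abel

lemma QQ_mul (a b : Fin m → ℝ) (i j : Fin 2) :
    QQ a i * QQ b j = ((4 : ℂ)⁻¹) •
      (1 + ((-1 : ℂ) ^ (j : ℕ)) • CC b + ((-1 : ℂ) ^ (i : ℕ)) • CC a
        + (((-1 : ℂ) ^ (i : ℕ)) * ((-1 : ℂ) ^ (j : ℕ))) • (CC a * CC b)) := by
  rw [QQ, QQ, Matrix.smul_mul, Matrix.mul_smul, smul_smul, expand_mul]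
  norm_num

lemma QQ_herm (a : Fin m → ℝ) (i : Fin 2) : (QQ a i).IsHermitian := by
  rw [Matrix.IsHermitian, QQ, Matrix.conjTranspose_smul, Matrix.conjTranspose_add,
    Matrix.conjTranspose_one, Matrix.conjTranspose_smul, (CC_herm a)]
  norm_num [star_pow]

lemma QQ_proj (a : Fin m → ℝ) (h : ∑ k, a k * a k = 1) (i : Fin 2) :
    QQ a i * QQ a i = QQ a i := by
  rw [QQ_mul, CC_sq a h, eps_sq, QQ]
  have : (1 : Matrix (Fin m → Bool) (Fin m → Bool) ℂ) + ((-1 : ℂ) ^ (i : ℕ)) • CC a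
      + ((-1 : ℂ) ^ (i : ℕ)) • CC a + (1 : ℂ) • 1
      = (2 : ℂ) • (1 + ((-1 : ℂ) ^ (i : ℕ)) • CC a) := by
    rw [one_smul, two_smul]
    abel
  rw [this, smul_smul]
  norm_num

lemma QQ_sum (a : Fin m → ℝ) : QQ a 0 + QQ a 1 = 1 := by
  rw [QQ, QQ]
  have h0 : ((-1 : ℂ) ^ (((0 : Fin 2)) : ℕ)) = 1 := by norm_num
  have h1 : ((-1 : ℂ) ^ (((1 : Fin 2)) : ℕ)) = -1 := by norm_num
  rw [h0, h1, one_smul, neg_one_smul, ← smul_add]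
  have : (1 : Matrix (Fin m → Bool) (Fin m → Bool) ℂ) + CC a + (1 + -CC a)
      = (2 : ℂ) • 1 := by
    rw [two_smul]
    abel
  rw [this, smul_smul]
  norm_num

lemma trace_QQ_mul (a b : Fin m → ℝ) (i j : Fin 2) :
    (QQ a i * QQ b j).trace = (4 : ℂ)⁻¹ * ((2 : ℂ) ^ m)
      * (1 + (((-1 : ℂ) ^ (i : ℕ)) * ((-1 : ℂ) ^ (j : ℕ))) * ∑ k, (a k : ℂ) * (b k : ℂ)) := by
  rw [QQ_mul, Matrix.trace_smul, Matrix.trace_add, Matrix.trace_add, Matrix.trace_add,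
    Matrix.trace_smul, Matrix.trace_smul, Matrix.trace_smul, trace_CC, trace_CC,
    Matrix.trace_one, trace_CC_mul]
  simp [Fintype.card_fun, smul_eq_mul]
  ring

lemma trace_submatrix_equiv' {α β : Type*} [Fintype α] [Fintype β]
    (e : α ≃ β) (M : Matrix β β ℂ) : (M.submatrix e e).trace = M.trace := by
  rw [Matrix.trace, Matrix.trace]
  exact Fintype.sum_equiv e _ _ (fun s => rfl)

end Stmt19Aux

open Stmt19Aux

/-- Given unit vectors `x₁,…,xₙ ∈ ℝ^m`, there are `d ≥ 1` and projections
`P_{v,i} ∈ M_d(ℂ)` with `P_{v,0} + P_{v,1} = I` and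
`(1/d)·Tr(P_{v,i} P_{w,j}) = (1/4)(1 + (−1)^{i+j} ⟨x_v, x_w⟩)`. -/
theorem stmt19 {m n : ℕ} (hm : 1 ≤ m) (x : Fin n → EuclideanSpace ℝ (Fin m))
    (hx : ∀ v, ‖x v‖ = 1) :
    ∃ (d : ℕ), 1 ≤ d ∧
      ∃ P : Fin n → Fin 2 → Matrix (Fin d) (Fin d) ℂ,
        (∀ v i, IsProjMat (P v i)) ∧
        (∀ v, P v 0 + P v 1 = 1) ∧
        (∀ (v w : Fin n) (i j : Fin 2),
          (1 / (d : ℂ)) * (P v i * P w j).trace =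
            ((1 / 4 * (1 + (-1 : ℝ) ^ ((i : ℕ) + (j : ℕ)) * inner ℝ (x v) (x w)) : ℝ) : ℂ)) := by
  refine ⟨2 ^ m, Nat.one_le_two_pow, ?_⟩
  have hcard : Fintype.card (Fin m → Bool) = 2 ^ m := by
    simp [Fintype.card_fun]
  let e : (Fin m → Bool) ≃ Fin (2 ^ m) := Fintype.equivFinOfCardEq hcard
  have hnorm : ∀ v, ∑ k, x v k * x v k = 1 := by
    intro v
    have h1 : (inner ℝ (x v) (x v) : ℝ) = 1 := by
      rw [real_inner_self_eq_norm_sq, hx v]; norm_num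
    rw [← h1, PiLp.inner_apply]
    simp [RCLike.inner_apply, sq]
  refine ⟨fun v i => (QQ (fun k => x v k) i).submatrix e.symm e.symm, ?_, ?_, ?_⟩
  · intro v i
    dsimp only
    constructor
    · exact (QQ_herm _ i).submatrix _
    · rw [Matrix.submatrix_mul_equiv, QQ_proj _ (hnorm v)]
  · intro v
    dsimp only
    have hadd : (QQ (fun k => x v k) 0).submatrix ⇑e.symm ⇑e.symm
        + (QQ (fun k => x v k) 1).submatrix ⇑e.symm ⇑e.symm
        = (QQ (fun k => x v k) 0 + QQ (fun k => x v k) 1).submatrix ⇑e.symm ⇑e.symm := rfl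
    rw [hadd, QQ_sum, Matrix.submatrix_one_equiv]
  · intro v w i j
    dsimp only
    rw [Matrix.submatrix_mul_equiv, trace_submatrix_equiv', trace_QQ_mul]
    have hinner : (inner ℝ (x v) (x w) : ℝ) = ∑ k, x v k * x w k := by
      rw [PiLp.inner_apply]; simp [RCLike.inner_apply, mul_comm]
    have h2 : ((2 : ℂ) ^ m) ≠ 0 := pow_ne_zero _ two_ne_zero
    rw [hinner]
    push_cast
    rw [← pow_add]
    field_simp
end
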